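/- arXiv:2105.12767 — 8 statements merged into one kernel-verified Lean document; each statement's English description precedes it below -/
import Mathlib

section
/- Let R, R̃ : Fin L → ℝ³ be two families of nuclear positions and δ_R ≥ 0 a real number such that ‖R̃_ℓ − R_ℓ‖ ≤ δ_R for every ℓ. Define for a family of positions S : Fin L → ℝ³ the operator U(S) on the η-particle Hilbert space ℂ^{Gᶯ} by U(S) = −(4π/Ω) · Σ_{ℓ=1}^{L} Σ_{j=1}^{η} Σ_{p,q ∈ G, p ≠ q} ζ_ℓ · (exp(i k_{q−p}·S_ℓ)/‖k_{p−q}‖²) · (|p⟩⟨q|)_j. Then ‖U(R̃) − U(R)‖ ≤ (2 δ_R η λ_ζ / Ω^{2/3}) · Σ_{ν ∈ G₀} 1/‖ν‖, where the norm on the left is the operator norm. -/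
open scoped Classical

noncomputable section

/-- The set `G` of plane-wave indices. -/
def Gfin (n_p : ℕ) : Finset (Fin 3 → ℤ) :=
  Fintype.piFinset fun _ => Finset.Icc (-(2 ^ (n_p - 1) - 1)) (2 ^ (n_p - 1) - 1)

/-- `G₀`: differences of frequencies in the enlarged box, excluding the zero mode. -/
def G0fin (n_p : ℕ) : Finset (Fin 3 → ℤ) :=
  (Fintype.piFinset fun _ => Finset.Icc (-(2 ^ n_p - 1)) (2 ^ n_p - 1)).erase 0

/-- Euclidean norm of an integer 3-vector. -/
def enorm3 (ν : Fin 3 → ℤ) : ℝ := Real.sqrt (∑ i, ((ν i : ℝ)) ^ 2)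

/-- The reciprocal-lattice vector `k_ν = (2π/Ω^{1/3})·ν ∈ ℝ³`. -/
def kvec (Ω : ℝ) (ν : Fin 3 → ℤ) : EuclideanSpace ℝ (Fin 3) :=
  (2 * Real.pi / Ω ^ ((1 : ℝ) / 3)) •
    (WithLp.equiv 2 (Fin 3 → ℝ)).symm fun i => (ν i : ℝ)

/-- The rank-one operator `(|p⟩⟨q|)_j` on the `η`-particle space, as a matrix. -/
def ketbra {n_p η : ℕ} (j : Fin η) (p q : ↥(Gfin n_p)) :
    Matrix (Fin η → ↥(Gfin n_p)) (Fin η → ↥(Gfin n_p)) ℂ :=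
  fun g f => if g j = p ∧ f j = q ∧ ∀ i, i ≠ j → g i = f i then 1 else 0

/-- Operator (ℓ² → ℓ²) norm of a matrix. -/
def matOpNorm {ι : Type*} [Fintype ι] [DecidableEq ι] (A : Matrix ι ι ℂ) : ℝ :=
  ‖LinearMap.toContinuousLinearMap (Matrix.toEuclideanLin A)‖

/-- The electron–nucleus potential operator `U(S)`. -/
def Uop (n_p η L : ℕ) (Ω : ℝ) (ζ : Fin L → ℝ) (S : Fin L → EuclideanSpace ℝ (Fin 3)) :
    Matrix (Fin η → ↥(Gfin n_p)) (Fin η → ↥(Gfin n_p)) ℂ :=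
  (-(4 * Real.pi / Ω : ℝ) : ℂ) • ∑ ℓ : Fin L, ∑ j : Fin η,
    ∑ p : ↥(Gfin n_p), ∑ q : ↥(Gfin n_p),
      if p = q then 0 else
        ((Complex.ofReal (ζ ℓ) *
            Complex.exp (Complex.I *
              Complex.ofReal
                (inner ℝ (kvec Ω ((q : Fin 3 → ℤ) - (p : Fin 3 → ℤ))) (S ℓ)))) /
          Complex.ofReal (‖kvec Ω ((p : Fin 3 → ℤ) - (q : Fin 3 → ℤ))‖ ^ 2)) •
          ketbra j p q


/-! ### Auxiliary lemmas -/

lemma norm_exp_I_mul_sub (a b : ℝ) :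
    ‖Complex.exp (Complex.I * a) - Complex.exp (Complex.I * b)‖ ≤ |a - b| := by
  have key : ∀ t : ℝ, ‖Complex.exp (Complex.I * t) - 1‖ ≤ |t| := by
    intro t
    have h1 : Complex.exp (Complex.I * t) = (Real.cos t : ℂ) + (Real.sin t : ℂ) * Complex.I := by
      rw [mul_comm, Complex.exp_mul_I, ← Complex.ofReal_cos, ← Complex.ofReal_sin]
    rw [h1]
    have h2 : ‖((Real.cos t : ℂ) + (Real.sin t : ℂ) * Complex.I - 1 : ℂ)‖
        = Real.sqrt ((Real.cos t - 1) ^ 2 + Real.sin t ^ 2) := by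
      rw [Complex.norm_def, Complex.normSq_apply]
      simp [Complex.add_re, Complex.sub_re, Complex.add_im, Complex.sub_im,
        Complex.cos_ofReal_re, Complex.sin_ofReal_re]
      ring_nf
    rw [h2]
    have h3 : (Real.cos t - 1) ^ 2 + Real.sin t ^ 2 ≤ t ^ 2 := by
      have hc : Real.cos t = 2 * Real.cos (t / 2) ^ 2 - 1 := by
        have := Real.cos_two_mul (t / 2)
        rw [show 2 * (t / 2) = t by ring] at this
        linarith
      have hp : Real.sin (t / 2) ^ 2 + Real.cos (t / 2) ^ 2 = 1 := Real.sin_sq_add_cos_sq _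
      have hp2 : Real.sin t ^ 2 + Real.cos t ^ 2 = 1 := Real.sin_sq_add_cos_sq _
      have hs : Real.sin (t / 2) ^ 2 ≤ (t / 2) ^ 2 := Real.sin_sq_le_sq
      nlinarith
    calc Real.sqrt ((Real.cos t - 1) ^ 2 + Real.sin t ^ 2) ≤ Real.sqrt (t ^ 2) :=
          Real.sqrt_le_sqrt h3
      _ = |t| := Real.sqrt_sq_eq_abs t
  have h0 : Complex.I * (a : ℂ) = Complex.I * (b : ℂ) + Complex.I * ((a - b : ℝ) : ℂ) := by
    push_cast; ring
  have h1 : Complex.exp (Complex.I * a) - Complex.exp (Complex.I * b)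
      = Complex.exp (Complex.I * b) * (Complex.exp (Complex.I * ((a - b : ℝ) : ℂ)) - 1) := by
    rw [h0, Complex.exp_add]; ring
  rw [h1, norm_mul]
  have h2 : ‖Complex.exp (Complex.I * (b : ℂ))‖ = 1 := by
    rw [Complex.norm_exp]; simp
  rw [h2, one_mul]
  exact key (a - b)

lemma enorm3_nonneg (ν : Fin 3 → ℤ) : 0 ≤ enorm3 ν := Real.sqrt_nonneg _

lemma enorm3_neg (ν : Fin 3 → ℤ) : enorm3 (-ν) = enorm3 ν := by
  unfold enorm3; congr 1; apply Finset.sum_congr rfl; intro i _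
  simp only [Pi.neg_apply, Int.cast_neg, neg_sq]

lemma enorm3_pos {ν : Fin 3 → ℤ} (hν : ν ≠ 0) : 0 < enorm3 ν := by
  unfold enorm3
  apply Real.sqrt_pos.mpr
  obtain ⟨i, hi⟩ : ∃ i, ν i ≠ 0 := by
    by_contra h; push_neg at h; exact hν (funext h)
  apply Finset.sum_pos' (fun i _ => sq_nonneg _)
  exact ⟨i, Finset.mem_univ i, by positivity⟩

lemma norm_kvec (Ω : ℝ) (hΩ : 0 < Ω) (ν : Fin 3 → ℤ) :
    ‖kvec Ω ν‖ = (2 * Real.pi / Ω ^ ((1 : ℝ) / 3)) * enorm3 ν := by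
  unfold kvec
  rw [norm_smul]
  congr 1
  · rw [Real.norm_eq_abs, abs_of_nonneg]
    positivity
  · rw [EuclideanSpace.norm_eq]
    unfold enorm3
    congr 1
    apply Finset.sum_congr rfl
    intro i _
    rw [WithLp.equiv_symm_apply, PiLp.toLp_apply, Real.norm_eq_abs, sq_abs]

lemma sub_mem_G0 {n_p : ℕ} (hnp : 0 < n_p) {p q : Fin 3 → ℤ}
    (hp : p ∈ Gfin n_p) (hq : q ∈ Gfin n_p) (hne : q ≠ p) : q - p ∈ G0fin n_p := by
  rw [Gfin, Fintype.mem_piFinset] at hp hq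
  rw [G0fin, Finset.mem_erase]
  constructor
  · exact sub_ne_zero.mpr hne
  · rw [Fintype.mem_piFinset]
    intro i
    have h1 := hp i
    have h2 := hq i
    rw [Finset.mem_Icc] at h1 h2 ⊢
    have hpow : (2 : ℤ) ^ (n_p - 1) * 2 = 2 ^ n_p := by
      rw [← pow_succ, Nat.sub_add_cancel hnp]
    simp only [Pi.sub_apply]
    omega

section opnorm
variable {ι : Type*} [Fintype ι] [DecidableEq ι]

lemma matOpNorm_smul (c : ℂ) (A : Matrix ι ι ℂ) : matOpNorm (c • A) = ‖c‖ * matOpNorm A := by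
  unfold matOpNorm
  rw [map_smul, map_smul]
  exact norm_smul c (LinearMap.toContinuousLinearMap (Matrix.toEuclideanLin A))

lemma matOpNorm_sum_le {α : Type*} (s : Finset α) (f : α → Matrix ι ι ℂ) :
    matOpNorm (∑ a ∈ s, f a) ≤ ∑ a ∈ s, matOpNorm (f a) := by
  unfold matOpNorm
  rw [map_sum, map_sum]
  exact norm_sum_le _ _

end opnorm

def shiftMat (n_p η : ℕ) (j : Fin η) (ν : Fin 3 → ℤ) :
    Matrix (Fin η → ↥(Gfin n_p)) (Fin η → ↥(Gfin n_p)) ℂ :=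
  ∑ p : ↥(Gfin n_p), ∑ q : ↥(Gfin n_p),
    if ((q : Fin 3 → ℤ) - (p : Fin 3 → ℤ) = ν) then ketbra j p q else 0

lemma shiftMat_apply (n_p η : ℕ) (j : Fin η) (ν : Fin 3 → ℤ)
    (g f : Fin η → ↥(Gfin n_p)) :
    shiftMat n_p η j ν g f =
      if ((f j : Fin 3 → ℤ) - (g j : Fin 3 → ℤ) = ν ∧ ∀ i, i ≠ j → g i = f i) then 1 else 0 := by
  unfold shiftMat
  rw [Matrix.sum_apply]
  rw [Finset.sum_eq_single (g j)]
  · rw [Matrix.sum_apply, Finset.sum_eq_single (f j)]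
    · by_cases h : ((f j : Fin 3 → ℤ) - (g j : Fin 3 → ℤ) = ν)
      · rw [if_pos h]
        unfold ketbra
        by_cases h2 : ∀ i, i ≠ j → g i = f i
        · rw [if_pos ⟨rfl, rfl, h2⟩, if_pos ⟨h, h2⟩]
        · rw [if_neg, if_neg]
          · rintro ⟨-, h2'⟩; exact h2 h2'
          · rintro ⟨-, -, h2'⟩; exact h2 h2'
      · rw [if_neg h, if_neg, Matrix.zero_apply]
        rintro ⟨h', -⟩; exact h h'
    · intro q _ hq
      by_cases h : ((q : Fin 3 → ℤ) - (g j : Fin 3 → ℤ) = ν)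
      · rw [if_pos h]
        unfold ketbra
        rw [if_neg]
        rintro ⟨-, h', -⟩; exact hq h'.symm
      · rw [if_neg h, Matrix.zero_apply]
    · intro h; exact absurd (Finset.mem_univ _) h
  · intro p _ hp
    rw [Matrix.sum_apply]
    apply Finset.sum_eq_zero
    intro q _
    by_cases h : ((q : Fin 3 → ℤ) - (p : Fin 3 → ℤ) = ν)
    · rw [if_pos h]
      unfold ketbra
      rw [if_neg]
      rintro ⟨h', -, -⟩; exact hp h'.symm
    · rw [if_neg h, Matrix.zero_apply]
  · intro h; exact absurd (Finset.mem_univ _) h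

lemma matOpNorm_shiftMat_le (n_p η : ℕ) (j : Fin η) (ν : Fin 3 → ℤ) :
    matOpNorm (shiftMat n_p η j ν) ≤ 1 := by
  classical
  set ι := (Fin η → ↥(Gfin n_p))
  set σ : ι → ι := fun g =>
    if h : ((g j : Fin 3 → ℤ) + ν) ∈ Gfin n_p then Function.update g j ⟨_, h⟩ else g with hσ
  unfold matOpNorm
  apply ContinuousLinearMap.opNorm_le_bound _ zero_le_one
  intro x
  rw [one_mul]
  show ‖Matrix.toEuclideanLin (shiftMat n_p η j ν) x‖ ≤ ‖x‖
  have hrow : ∀ g : ι, (Matrix.toEuclideanLin (shiftMat n_p η j ν) x) g =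
      if ((g j : Fin 3 → ℤ) + ν) ∈ Gfin n_p then x (σ g) else 0 := by
    intro g
    rw [Matrix.toEuclideanLin_apply]
    show Matrix.mulVec (shiftMat n_p η j ν) ((WithLp.equiv 2 _) x) g = _
    rw [Matrix.mulVec, dotProduct]
    by_cases h : ((g j : Fin 3 → ℤ) + ν) ∈ Gfin n_p
    · rw [if_pos h]
      rw [Finset.sum_eq_single (σ g)]
      · have h1 : σ g j = (⟨_, h⟩ : ↥(Gfin n_p)) := by
          rw [hσ]; simp only [dif_pos h, Function.update_self]
        rw [shiftMat_apply, if_pos, one_mul]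
        · rfl
        · constructor
          · rw [h1]; simp
          · intro i hi
            rw [hσ]; simp only [dif_pos h, Function.update_of_ne hi]
      · intro f _ hf
        rw [shiftMat_apply, if_neg, zero_mul]
        rintro ⟨h1, h2⟩
        apply hf
        funext i
        by_cases hij : i = j
        · subst hij
          rw [hσ]; simp only [dif_pos h, Function.update_self]
          apply Subtype.ext
          have : (f i : Fin 3 → ℤ) = (g i : Fin 3 → ℤ) + ν := by
            rw [← h1]; ring
          exact this
        · rw [hσ]; simp only [dif_pos h, Function.update_of_ne hij]
          exact (h2 i hij).symm
      · intro h'; exact absurd (Finset.mem_univ _) h'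
    · rw [if_neg h]
      apply Finset.sum_eq_zero
      intro f _
      rw [shiftMat_apply, if_neg, zero_mul]
      rintro ⟨h1, -⟩
      apply h
      have : ((f j : Fin 3 → ℤ)) = (g j : Fin 3 → ℤ) + ν := by rw [← h1]; ring
      rw [← this]
      exact (f j).2
  rw [EuclideanSpace.norm_eq, EuclideanSpace.norm_eq]
  apply Real.sqrt_le_sqrt
  have step1 : ∑ g : ι, ‖(Matrix.toEuclideanLin (shiftMat n_p η j ν) x) g‖ ^ 2
      = ∑ g ∈ Finset.univ.filter (fun g : ι => ((g j : Fin 3 → ℤ) + ν) ∈ Gfin n_p),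
          ‖x (σ g)‖ ^ 2 := by
    rw [Finset.sum_filter]
    apply Finset.sum_congr rfl
    intro g _
    rw [hrow g]
    split_ifs with h
    · rfl
    · simp
  rw [step1]
  rw [Finset.sum_filter]
  have step2 : ∀ g1 g2 : ι, ((g1 j : Fin 3 → ℤ) + ν) ∈ Gfin n_p →
      ((g2 j : Fin 3 → ℤ) + ν) ∈ Gfin n_p → σ g1 = σ g2 → g1 = g2 := by
    intro g1 g2 h1 h2 heq
    rw [hσ] at heq
    simp only [dif_pos h1, dif_pos h2] at heq
    funext i
    by_cases hij : i = j
    · subst hij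
      have := congrFun heq i
      rw [Function.update_self, Function.update_self] at this
      apply Subtype.ext
      have hcoe : (g1 i : Fin 3 → ℤ) + ν = (g2 i : Fin 3 → ℤ) + ν := congrArg Subtype.val this
      exact add_right_cancel hcoe
    · have := congrFun heq i
      rwa [Function.update_of_ne hij, Function.update_of_ne hij] at this
  rw [← Finset.sum_filter]
  have hinj : ∀ g1 ∈ Finset.univ.filter (fun g : ι => ((g j : Fin 3 → ℤ) + ν) ∈ Gfin n_p),
      ∀ g2 ∈ Finset.univ.filter (fun g : ι => ((g j : Fin 3 → ℤ) + ν) ∈ Gfin n_p),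
      σ g1 = σ g2 → g1 = g2 := by
    intro g1 hg1 g2 hg2 heq
    exact step2 g1 g2 (Finset.mem_filter.mp hg1).2 (Finset.mem_filter.mp hg2).2 heq
  have himg := Finset.sum_image (g := σ) (f := fun f : ι => ‖x f‖ ^ 2)
    (s := Finset.univ.filter (fun g : ι => ((g j : Fin 3 → ℤ) + ν) ∈ Gfin n_p)) hinj
  rw [← himg]
  apply Finset.sum_le_sum_of_subset_of_nonneg (Finset.subset_univ _)
  intro f _ _
  positivity

lemma sum_reindex (n_p η : ℕ) (hnp : 0 < n_p) (j : Fin η) (D : (Fin 3 → ℤ) → ℂ) :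
    (∑ p : ↥(Gfin n_p), ∑ q : ↥(Gfin n_p),
      if p = q then 0 else D ((q : Fin 3 → ℤ) - (p : Fin 3 → ℤ)) • ketbra j p q)
    = ∑ ν ∈ G0fin n_p, D ν • shiftMat n_p η j ν := by
  have hrhs : ∀ ν, D ν • shiftMat n_p η j ν
      = ∑ p : ↥(Gfin n_p), ∑ q : ↥(Gfin n_p),
          (if ((q : Fin 3 → ℤ) - (p : Fin 3 → ℤ) = ν) then D ν • ketbra j p q else 0) := by
    intro ν
    unfold shiftMat
    rw [Finset.smul_sum]
    apply Finset.sum_congr rfl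
    intro p _
    rw [Finset.smul_sum]
    apply Finset.sum_congr rfl
    intro q _
    split_ifs with h
    · rfl
    · exact smul_zero _
  rw [Finset.sum_congr rfl fun ν _ => hrhs ν]
  symm
  rw [Finset.sum_comm]
  apply Finset.sum_congr rfl
  intro p _
  rw [Finset.sum_comm]
  apply Finset.sum_congr rfl
  intro q _
  by_cases hpq : p = q
  · rw [if_pos hpq]
    apply Finset.sum_eq_zero
    intro ν hν
    rw [if_neg]
    intro h
    subst hpq
    rw [sub_self] at h
    exact (Finset.mem_erase.mp hν).1 h.symm
  · rw [if_neg hpq]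
    have hmem : (q : Fin 3 → ℤ) - (p : Fin 3 → ℤ) ∈ G0fin n_p :=
      sub_mem_G0 hnp p.2 q.2 (fun h => hpq (Subtype.ext h.symm))
    rw [Finset.sum_eq_single_of_mem _ hmem]
    · rw [if_pos rfl]
    · intro ν _ hν
      rw [if_neg (fun h => hν h.symm)]

def Dcoef (Ω : ℝ) (ζℓ : ℝ) (R' R : EuclideanSpace ℝ (Fin 3)) (ν : Fin 3 → ℤ) : ℂ :=
  (Complex.ofReal ζℓ *
      (Complex.exp (Complex.I * Complex.ofReal (inner ℝ (kvec Ω ν) R')) -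
        Complex.exp (Complex.I * Complex.ofReal (inner ℝ (kvec Ω ν) R)))) /
    Complex.ofReal (‖kvec Ω ν‖ ^ 2)

lemma norm_Dcoef_le (Ω : ℝ) (hΩ : 0 < Ω) (ζℓ : ℝ) (hζℓ : 0 ≤ ζℓ)
    (R' R : EuclideanSpace ℝ (Fin 3)) (δR : ℝ) (hδ : ‖R' - R‖ ≤ δR)
    {ν : Fin 3 → ℤ} (hν : ν ≠ 0) :
    ‖Dcoef Ω ζℓ R' R ν‖ ≤ ζℓ * δR / ((2 * Real.pi / Ω ^ ((1 : ℝ) / 3)) * enorm3 ν) := by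
  have hδ0 : 0 ≤ δR := le_trans (norm_nonneg _) hδ
  set κ := 2 * Real.pi / Ω ^ ((1 : ℝ) / 3) with hκdef
  have hκ : 0 < κ := by
    have := Real.rpow_pos_of_pos hΩ ((1 : ℝ) / 3)
    have := Real.pi_pos
    positivity
  have hk : ‖kvec Ω ν‖ = κ * enorm3 ν := norm_kvec Ω hΩ ν
  have hkpos : 0 < ‖kvec Ω ν‖ := by
    rw [hk]; exact mul_pos hκ (enorm3_pos hν)
  unfold Dcoef
  rw [norm_div, norm_mul]
  have h1 : ‖(Complex.ofReal ζℓ)‖ = ζℓ := by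
    rw [Complex.norm_real, Real.norm_eq_abs, abs_of_nonneg hζℓ]
  have h2 : ‖(Complex.ofReal (‖kvec Ω ν‖ ^ 2))‖ = ‖kvec Ω ν‖ ^ 2 := by
    rw [Complex.norm_real, Real.norm_eq_abs, abs_of_nonneg (sq_nonneg _)]
  have h3 : ‖Complex.exp (Complex.I * Complex.ofReal (inner ℝ (kvec Ω ν) R')) -
      Complex.exp (Complex.I * Complex.ofReal (inner ℝ (kvec Ω ν) R))‖
      ≤ ‖kvec Ω ν‖ * δR := by
    calc ‖_ - _‖ ≤ |(inner ℝ (kvec Ω ν) R' : ℝ) - (inner ℝ (kvec Ω ν) R : ℝ)| :=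
          norm_exp_I_mul_sub _ _
      _ = |(inner ℝ (kvec Ω ν) (R' - R) : ℝ)| := by rw [inner_sub_right]
      _ ≤ ‖kvec Ω ν‖ * ‖R' - R‖ := abs_real_inner_le_norm _ _
      _ ≤ ‖kvec Ω ν‖ * δR := by
          exact mul_le_mul_of_nonneg_left hδ (norm_nonneg _)
  rw [h1, h2]
  calc ζℓ * ‖_ - _‖ / ‖kvec Ω ν‖ ^ 2 ≤ ζℓ * (‖kvec Ω ν‖ * δR) / ‖kvec Ω ν‖ ^ 2 := by
        gcongr
    _ = ζℓ * δR / ‖kvec Ω ν‖ := by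
        field_simp
    _ = ζℓ * δR / (κ * enorm3 ν) := by rw [hk]


/-- Stability of the nuclear potential under perturbation of the nuclear positions:
if `‖R̃_ℓ − R_ℓ‖ ≤ δ_R` for all `ℓ`, then
`‖U(R̃) − U(R)‖ ≤ (2 δ_R η λ_ζ / Ω^{2/3}) · Σ_{ν ∈ G₀} 1/‖ν‖`. -/
theorem stmt_0 (n_p η L : ℕ) (hnp : 0 < n_p) (hη : 1 ≤ η) (hL : 1 ≤ L)
    (Ω : ℝ) (hΩ : 0 < Ω) (ζ : Fin L → ℝ) (hζ : ∀ ℓ, 0 < ζ ℓ)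
    (R R' : Fin L → EuclideanSpace ℝ (Fin 3))
    (δR : ℝ) (hδR : 0 ≤ δR) (hclose : ∀ ℓ, ‖R' ℓ - R ℓ‖ ≤ δR) :
    matOpNorm (Uop n_p η L Ω ζ R' - Uop n_p η L Ω ζ R)
      ≤ (2 * δR * η * (∑ ℓ, ζ ℓ) / Ω ^ ((2 : ℝ) / 3)) *
          ∑ ν ∈ G0fin n_p, 1 / enorm3 ν := by
  set κ := 2 * Real.pi / Ω ^ ((1 : ℝ) / 3) with hκdef
  have hΩ13 : (0:ℝ) < Ω ^ ((1:ℝ)/3) := Real.rpow_pos_of_pos hΩ _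
  have hΩ23 : (0:ℝ) < Ω ^ ((2:ℝ)/3) := Real.rpow_pos_of_pos hΩ _
  have hπ := Real.pi_pos
  have hκ : 0 < κ := by positivity
  have step : Uop n_p η L Ω ζ R' - Uop n_p η L Ω ζ R =
      (-(4 * Real.pi / Ω : ℝ) : ℂ) • ∑ ℓ : Fin L, ∑ j : Fin η,
        ∑ ν ∈ G0fin n_p, Dcoef Ω (ζ ℓ) (R' ℓ) (R ℓ) ν • shiftMat n_p η j ν := by
    unfold Uop
    rw [← smul_sub]
    congr 1
    rw [← Finset.sum_sub_distrib]
    apply Finset.sum_congr rfl; intro ℓ _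
    rw [← Finset.sum_sub_distrib]
    apply Finset.sum_congr rfl; intro j _
    rw [← sum_reindex n_p η hnp j (Dcoef Ω (ζ ℓ) (R' ℓ) (R ℓ))]
    rw [← Finset.sum_sub_distrib]
    apply Finset.sum_congr rfl; intro p _
    rw [← Finset.sum_sub_distrib]
    apply Finset.sum_congr rfl; intro q _
    by_cases hpq : p = q
    · rw [if_pos hpq, if_pos hpq, sub_zero, if_pos hpq]
    · rw [if_neg hpq, if_neg hpq, if_neg hpq, ← sub_smul]
      congr 1
      have hnorm : ‖kvec Ω ((p : Fin 3 → ℤ) - (q : Fin 3 → ℤ))‖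
          = ‖kvec Ω ((q : Fin 3 → ℤ) - (p : Fin 3 → ℤ))‖ := by
        rw [show ((p : Fin 3 → ℤ) - (q : Fin 3 → ℤ))
              = -(((q : Fin 3 → ℤ) - (p : Fin 3 → ℤ))) by ring,
          norm_kvec Ω hΩ, norm_kvec Ω hΩ, enorm3_neg]
      rw [hnorm]
      unfold Dcoef
      rw [div_sub_div_same, ← mul_sub]
  rw [step, matOpNorm_smul]
  have hc : ‖((-(4 * Real.pi / Ω : ℝ)) : ℂ)‖ = 4 * Real.pi / Ω := by
    rw [norm_neg, Complex.norm_real, Real.norm_eq_abs, abs_of_nonneg (by positivity)]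
  rw [hc]
  have hb1 : matOpNorm (∑ ℓ : Fin L, ∑ j : Fin η, ∑ ν ∈ G0fin n_p,
      Dcoef Ω (ζ ℓ) (R' ℓ) (R ℓ) ν • shiftMat n_p η j ν)
      ≤ ∑ ℓ : Fin L, ∑ j : Fin η, ∑ ν ∈ G0fin n_p, ζ ℓ * δR / (κ * enorm3 ν) := by
    refine le_trans (matOpNorm_sum_le _ _) (Finset.sum_le_sum fun ℓ _ => ?_)
    refine le_trans (matOpNorm_sum_le _ _) (Finset.sum_le_sum fun j _ => ?_)
    refine le_trans (matOpNorm_sum_le _ _) (Finset.sum_le_sum fun ν hν => ?_)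
    rw [matOpNorm_smul]
    have hν0 : ν ≠ 0 := (Finset.mem_erase.mp hν).1
    calc ‖Dcoef Ω (ζ ℓ) (R' ℓ) (R ℓ) ν‖ * matOpNorm (shiftMat n_p η j ν)
        ≤ ‖Dcoef Ω (ζ ℓ) (R' ℓ) (R ℓ) ν‖ * 1 :=
          mul_le_mul_of_nonneg_left (matOpNorm_shiftMat_le n_p η j ν) (norm_nonneg _)
      _ = ‖Dcoef Ω (ζ ℓ) (R' ℓ) (R ℓ) ν‖ := mul_one _
      _ ≤ ζ ℓ * δR / (κ * enorm3 ν) :=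
          norm_Dcoef_le Ω hΩ (ζ ℓ) (hζ ℓ).le (R' ℓ) (R ℓ) δR (hclose ℓ) hν0
  set Sν := ∑ ν ∈ G0fin n_p, 1 / enorm3 ν with hS
  have hev : ∑ ℓ : Fin L, ∑ j : Fin η, ∑ ν ∈ G0fin n_p, ζ ℓ * δR / (κ * enorm3 ν)
      = (η : ℝ) * δR / κ * Sν * ∑ ℓ, ζ ℓ := by
    have h1 : ∀ ℓ : Fin L, (∑ ν ∈ G0fin n_p, ζ ℓ * δR / (κ * enorm3 ν))
        = ζ ℓ * δR / κ * Sν := by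
      intro ℓ
      rw [hS, Finset.mul_sum]
      apply Finset.sum_congr rfl
      intro ν _
      rw [div_mul_eq_div_mul_one_div]
    simp only [h1, Finset.sum_const, Finset.card_univ, Fintype.card_fin, nsmul_eq_mul]
    rw [Finset.mul_sum]
    apply Finset.sum_congr rfl
    intro ℓ _
    ring
  have hid : 4 * Real.pi / Ω * ((η : ℝ) * δR / κ * Sν * ∑ ℓ, ζ ℓ)
      = (2 * δR * η * (∑ ℓ, ζ ℓ) / Ω ^ ((2 : ℝ) / 3)) * Sν := by
    have hsplit : Ω ^ ((2:ℝ)/3) * Ω ^ ((1:ℝ)/3) = Ω := by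
      rw [← Real.rpow_add hΩ]; norm_num
    rw [hκdef]
    field_simp
    linear_combination ((4:ℝ) * δR * Sν * (∑ ℓ, ζ ℓ)) * hsplit
  calc 4 * Real.pi / Ω * matOpNorm (∑ ℓ : Fin L, ∑ j : Fin η, ∑ ν ∈ G0fin n_p,
        Dcoef Ω (ζ ℓ) (R' ℓ) (R ℓ) ν • shiftMat n_p η j ν)
      ≤ 4 * Real.pi / Ω * ((η : ℝ) * δR / κ * Sν * ∑ ℓ, ζ ℓ) := by
        rw [← hev]
        exact mul_le_mul_of_nonneg_left hb1 (by positivity)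
    _ = (2 * δR * η * (∑ ℓ, ζ ℓ) / Ω ^ ((2 : ℝ) / 3)) * Sν := hid

end
end

section
/- Let H₁, H₂ : ℝ → B(𝓗) be continuous maps with H₁(t) and H₂(t) self-adjoint for every t, and let U₁, U₂ : ℝ → B(𝓗) satisfy U₁(0) = U₂(0) = I, U₁(t) and U₂(t) unitary for every t, and Uₖ'(t) = −i Hₖ(t) Uₖ(t) for every t and k = 1, 2. Then for every t ≥ 0, ‖U₁(t) − U₂(t)‖ ≤ ∫₀ᵗ ‖H₁(s) − H₂(s)‖ ds. -/
/-- If `U₁, U₂` are unitary-valued solutions of the Schrödinger equations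
`Uₖ' = −i Hₖ Uₖ` with `U₁(0) = U₂(0) = I` for continuous self-adjoint Hamiltonians
`H₁, H₂`, then `‖U₁(t) − U₂(t)‖ ≤ ∫₀ᵗ ‖H₁(s) − H₂(s)‖ ds` for all `t ≥ 0`. -/
theorem stmt_6 {𝓗 : Type*} [NormedAddCommGroup 𝓗] [InnerProductSpace ℂ 𝓗]
    [CompleteSpace 𝓗] (H₁ H₂ : ℝ → 𝓗 →L[ℂ] 𝓗)
    (hH₁cont : Continuous H₁) (hH₂cont : Continuous H₂)
    (hH₁sa : ∀ t, IsSelfAdjoint (H₁ t)) (hH₂sa : ∀ t, IsSelfAdjoint (H₂ t))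
    (U₁ U₂ : ℝ → 𝓗 →L[ℂ] 𝓗)
    (hU₁0 : U₁ 0 = 1) (hU₂0 : U₂ 0 = 1)
    (hU₁unit : ∀ t, U₁ t ∈ unitary (𝓗 →L[ℂ] 𝓗))
    (hU₂unit : ∀ t, U₂ t ∈ unitary (𝓗 →L[ℂ] 𝓗))
    (hU₁deriv : ∀ t, HasDerivAt U₁ (-(Complex.I • (H₁ t * U₁ t))) t)
    (hU₂deriv : ∀ t, HasDerivAt U₂ (-(Complex.I • (H₂ t * U₂ t))) t) :
    ∀ t : ℝ, 0 ≤ t → ‖U₁ t - U₂ t‖ ≤ ∫ s in (0 : ℝ)..t, ‖H₁ s - H₂ s‖ := by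
  intro t ht
  -- W s = (U₂ s)⋆ * U₁ s
  set W : ℝ → 𝓗 →L[ℂ] 𝓗 := fun s => star (U₂ s) * U₁ s with hW
  set D : ℝ → 𝓗 →L[ℂ] 𝓗 := fun s => Complex.I • (star (U₂ s) * (H₂ s - H₁ s) * U₁ s) with hD
  have hU₁cont : Continuous U₁ := by
    rw [continuous_iff_continuousAt]; exact fun s => (hU₁deriv s).continuousAt
  have hU₂cont : Continuous U₂ := by
    rw [continuous_iff_continuousAt]; exact fun s => (hU₂deriv s).continuousAt
  have hWderiv : ∀ s, HasDerivAt W (D s) s := by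
    intro s
    have h2 := (hU₂deriv s).star.mul (hU₁deriv s)
    convert h2 using 1
    case e'_4 => rfl
    case e'_5 => rfl
    case e'_6 => rfl
    case e'_8 => rfl
    have hstar : star (-(Complex.I • (H₂ s * U₂ s))) = Complex.I • (star (U₂ s) * H₂ s) := by
      simp [star_smul, star_mul, (hH₂sa s).star_eq, Complex.conj_I, neg_smul]
    rw [hstar]
    simp only [hD]
    rw [mul_sub, sub_mul, smul_sub]
    simp [mul_smul_comm, mul_assoc, sub_eq_add_neg]
  have hWcont : Continuous (fun s => D s) := by
    refine Continuous.const_smul (g := fun s => star (U₂ s) * (H₂ s - H₁ s) * U₁ s) ?_ Complex.I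
    exact ((continuous_star.comp hU₂cont).mul ((hH₂cont.sub hH₁cont))).mul hU₁cont
  have key : W t - 1 = ∫ s in (0:ℝ)..t, D s := by
    have := intervalIntegral.integral_eq_sub_of_hasDerivAt
      (fun s _ => hWderiv s) (hWcont.intervalIntegrable 0 t)
    rw [this, hW]
    simp [hU₁0, hU₂0]
  have hDnorm : ∀ s, ‖D s‖ ≤ ‖H₁ s - H₂ s‖ := by
    intro s
    rw [hD]
    simp only [norm_smul, Complex.norm_I, one_mul]
    rw [CStarRing.norm_mul_mem_unitary _ (hU₁unit s),
      CStarRing.norm_mem_unitary_mul _ (Unitary.star_mem (hU₂unit s)), ← norm_neg, neg_sub]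
  have hbound : ‖W t - 1‖ ≤ ∫ s in (0:ℝ)..t, ‖H₁ s - H₂ s‖ := by
    rw [key]
    calc ‖∫ s in (0:ℝ)..t, D s‖ ≤ ∫ s in (0:ℝ)..t, ‖D s‖ :=
          intervalIntegral.norm_integral_le_integral_norm ht
      _ ≤ ∫ s in (0:ℝ)..t, ‖H₁ s - H₂ s‖ := by
          apply intervalIntegral.integral_mono_on ht
          · exact (hWcont.norm).intervalIntegrable 0 t
          · exact ((hH₁cont.sub hH₂cont).norm).intervalIntegrable 0 t
          · exact fun s _ => hDnorm s
  have heq : U₁ t - U₂ t = U₂ t * (W t - 1) := by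
    rw [hW, mul_sub, mul_one, ← mul_assoc, Unitary.mul_star_self_of_mem (hU₂unit t), one_mul]
  calc ‖U₁ t - U₂ t‖ = ‖W t - 1‖ := by
        rw [heq, CStarRing.norm_mem_unitary_mul _ (hU₂unit t)]
    _ ≤ _ := hbound
end

section
/- For every τ ∈ ℝ and every δ ≥ 0, the midpoint-rule error bound ‖δ·H(τ) − ∫_{τ−δ/2}^{τ+δ/2} H(s) ds‖ ≤ (δ³/6)·‖A‖²·‖B‖ holds, where the integral is the Bochner integral of the continuous operator-valued function H. -/
/-- The interaction-picture Hamiltonian `H(t) = exp(itA) · B · exp(−itA)`. -/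
noncomputable def Hrot {𝓗 : Type*} [NormedAddCommGroup 𝓗] [InnerProductSpace ℂ 𝓗]
    [CompleteSpace 𝓗] (A B : 𝓗 →L[ℂ] 𝓗) (t : ℝ) : 𝓗 →L[ℂ] 𝓗 :=
  NormedSpace.exp (((t : ℂ) * Complex.I) • A) * B *
    NormedSpace.exp ((-(t : ℂ) * Complex.I) • A)

section Aux

variable {𝓗 : Type*} [NormedAddCommGroup 𝓗] [InnerProductSpace ℂ 𝓗] [CompleteSpace 𝓗]

/-- `uA A t = exp(itA)`. -/
noncomputable def uA (A : 𝓗 →L[ℂ] 𝓗) (t : ℝ) : 𝓗 →L[ℂ] 𝓗 :=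
  NormedSpace.exp (((t : ℂ) * Complex.I) • A)

lemma Hrot_eq_uA (A B : 𝓗 →L[ℂ] 𝓗) (t : ℝ) :
    Hrot A B t = uA A t * B * uA A (-t) := by
  simp [Hrot, uA]

lemma uA_hasDerivAt (A : 𝓗 →L[ℂ] 𝓗) (t : ℝ) :
    HasDerivAt (uA A) (uA A t * (Complex.I • A)) t := by
  have key : ∀ s : ℝ, NormedSpace.exp (s • (Complex.I • A)) = uA A s := by
    intro s
    congr 1
    rw [← smul_assoc, Complex.real_smul, mul_comm]
  have h := hasDerivAt_exp_smul_const (𝕂 := ℝ) (Complex.I • A) t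
  simp only [key] at h
  exact h

lemma uA_mem_unitary (A : 𝓗 →L[ℂ] 𝓗) (hA : IsSelfAdjoint A) (t : ℝ) :
    uA A t ∈ unitary (𝓗 →L[ℂ] 𝓗) := by
  letI : NormedAlgebra ℚ (𝓗 →L[ℂ] 𝓗) := NormedAlgebra.restrictScalars ℚ ℂ _
  apply NormedSpace.exp_mem_unitary_of_mem_skewAdjoint
  rw [skewAdjoint.mem_iff, star_smul, hA.star_eq]
  have hst : star ((t : ℂ) * Complex.I) = -((t : ℂ) * Complex.I) := by
    simp [Complex.star_def, Complex.ext_iff]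
  rw [hst, neg_smul]

lemma norm_uA_le_one (A : 𝓗 →L[ℂ] 𝓗) (hA : IsSelfAdjoint A) (t : ℝ) :
    ‖uA A t‖ ≤ 1 := by
  rcases subsingleton_or_nontrivial 𝓗 with h | h
  · exact ContinuousLinearMap.opNorm_le_bound _ zero_le_one fun x => by
      rw [Subsingleton.elim x 0]; simp
  · haveI : Nontrivial (𝓗 →L[ℂ] 𝓗) := by
      obtain ⟨x, hx⟩ := exists_ne (0 : 𝓗)
      exact ⟨0, 1, fun h => hx (by simpa using congrArg (fun T => T x) h.symm)⟩
    exact le_of_eq (CStarRing.norm_of_mem_unitary (uA_mem_unitary A hA t))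

lemma uA_lipschitz (A : 𝓗 →L[ℂ] 𝓗) (hA : IsSelfAdjoint A) (u v : ℝ) :
    ‖uA A u - uA A v‖ ≤ ‖A‖ * |u - v| := by
  have := Convex.norm_image_sub_le_of_norm_hasDerivWithin_le (𝕜 := ℝ)
    (f := uA A) (f' := fun s => uA A s * (Complex.I • A)) (s := Set.univ) (C := ‖A‖)
    (fun x _ => (uA_hasDerivAt A x).hasDerivWithinAt)
    (fun x _ => by
      calc ‖uA A x * (Complex.I • A)‖ ≤ ‖uA A x‖ * ‖Complex.I • A‖ := norm_mul_le _ _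
        _ ≤ 1 * (‖Complex.I‖ * ‖A‖) := by
            gcongr
            · exact norm_uA_le_one A hA x
            · exact (norm_smul _ _).le
        _ = ‖A‖ := by simp)
    convex_univ (Set.mem_univ v) (Set.mem_univ u)
  simpa [Real.norm_eq_abs] using this

lemma Hrot_hasDerivAt (A B : 𝓗 →L[ℂ] 𝓗) (t : ℝ) :
    HasDerivAt (Hrot A B)
      (Hrot A ((Complex.I • A) * B - B * (Complex.I • A)) t) t := by
  have h1 := uA_hasDerivAt A t
  have h2 : HasDerivAt (fun s : ℝ => uA A (-s)) (-(uA A (-t) * (Complex.I • A))) t := by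
    have h := (uA_hasDerivAt A (-t)).scomp t (hasDerivAt_neg t)
    convert h using 1
    · rfl
    · rfl
    · rfl
    · rfl
    · simp
  have h3 := (h1.mul_const B).mul h2
  have hcomm : uA A (-t) * (Complex.I • A) = (Complex.I • A) * uA A (-t) := by
    have hc : Commute ((((-t : ℝ) : ℂ) * Complex.I) • A) (Complex.I • A) :=
      ((Commute.refl A).smul_left _).smul_right _
    exact hc.exp_left.eq
  have h4 : HasDerivAt (fun s : ℝ => uA A s * B * uA A (-s))
      (uA A t * ((Complex.I • A) * B - B * (Complex.I • A)) * uA A (-t)) t := by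
    convert h3 using 1
    · rfl
    · rfl
    · rfl
    · rfl
    rw [hcomm]
    noncomm_ring
  have hfun : Hrot A B = fun s : ℝ => uA A s * B * uA A (-s) :=
    funext fun s => Hrot_eq_uA A B s
  rw [hfun, Hrot_eq_uA]
  exact h4

lemma Hrot_continuous (A B : 𝓗 →L[ℂ] 𝓗) : Continuous (Hrot A B) :=
  continuous_iff_continuousAt.2 fun t => (Hrot_hasDerivAt A B t).continuousAt

lemma Hrot_lipschitz (A B : 𝓗 →L[ℂ] 𝓗) (hA : IsSelfAdjoint A) (u v : ℝ) :
    ‖Hrot A B u - Hrot A B v‖ ≤ 2 * ‖A‖ * ‖B‖ * |u - v| := by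
  rw [Hrot_eq_uA, Hrot_eq_uA]
  have hsplit : uA A u * B * uA A (-u) - uA A v * B * uA A (-v)
      = (uA A u - uA A v) * B * uA A (-u) + uA A v * B * (uA A (-u) - uA A (-v)) := by
    noncomm_ring
  rw [hsplit]
  have hab : |(-u : ℝ) - -v| = |u - v| := by rw [show (-u : ℝ) - -v = -(u - v) by ring, abs_neg]
  have e1 : ‖(uA A u - uA A v) * B * uA A (-u)‖ ≤ ‖A‖ * |u - v| * ‖B‖ * 1 := by
    calc ‖(uA A u - uA A v) * B * uA A (-u)‖
        ≤ ‖(uA A u - uA A v) * B‖ * ‖uA A (-u)‖ := norm_mul_le _ _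
      _ ≤ ‖uA A u - uA A v‖ * ‖B‖ * ‖uA A (-u)‖ := by
          gcongr; exact norm_mul_le _ _
      _ ≤ ‖A‖ * |u - v| * ‖B‖ * 1 := by
          gcongr
          · exact uA_lipschitz A hA u v
          · exact norm_uA_le_one A hA (-u)
  have e2 : ‖uA A v * B * (uA A (-u) - uA A (-v))‖ ≤ 1 * ‖B‖ * (‖A‖ * |u - v|) := by
    calc ‖uA A v * B * (uA A (-u) - uA A (-v))‖
        ≤ ‖uA A v * B‖ * ‖uA A (-u) - uA A (-v)‖ := norm_mul_le _ _
      _ ≤ ‖uA A v‖ * ‖B‖ * ‖uA A (-u) - uA A (-v)‖ := by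
          gcongr; exact norm_mul_le _ _
      _ ≤ 1 * ‖B‖ * (‖A‖ * |u - v|) := by
          gcongr
          · exact norm_uA_le_one A hA v
          · exact hab ▸ uA_lipschitz A hA (-u) (-v)
  calc ‖(uA A u - uA A v) * B * uA A (-u) + uA A v * B * (uA A (-u) - uA A (-v))‖
      ≤ ‖(uA A u - uA A v) * B * uA A (-u)‖ + ‖uA A v * B * (uA A (-u) - uA A (-v))‖ :=
        norm_add_le _ _
    _ ≤ ‖A‖ * |u - v| * ‖B‖ * 1 + 1 * ‖B‖ * (‖A‖ * |u - v|) := add_le_add e1 e2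
    _ = 2 * ‖A‖ * ‖B‖ * |u - v| := by ring

end Aux

set_option maxHeartbeats 1000000 in
/-- Midpoint-rule error bound:
`‖δ·H(τ) − ∫_{τ−δ/2}^{τ+δ/2} H(s) ds‖ ≤ (δ³/6)·‖A‖²·‖B‖`. -/
theorem stmt_9 {𝓗 : Type*} [NormedAddCommGroup 𝓗] [InnerProductSpace ℂ 𝓗]
    [CompleteSpace 𝓗] (A B : 𝓗 →L[ℂ] 𝓗)
    (hA : IsSelfAdjoint A) (hB : IsSelfAdjoint B) (τ δ : ℝ) (hδ : 0 ≤ δ) :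
    ‖δ • Hrot A B τ - ∫ s in (τ - δ / 2)..(τ + δ / 2), Hrot A B s‖
      ≤ (δ ^ 3 / 6) * ‖A‖ ^ 2 * ‖B‖ := by
  set C : 𝓗 →L[ℂ] 𝓗 := (Complex.I • A) * B - B * (Complex.I • A) with hCdef
  set D : 𝓗 →L[ℂ] 𝓗 := Hrot A C τ with hDdef
  set M : ℝ := 4 * ‖A‖ ^ 2 * ‖B‖ with hMdef
  have hM0 : 0 ≤ M := by positivity
  have hC : ‖C‖ ≤ 2 * ‖A‖ * ‖B‖ := by
    calc ‖C‖ ≤ ‖(Complex.I • A) * B‖ + ‖B * (Complex.I • A)‖ := norm_sub_le _ _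
      _ ≤ ‖Complex.I • A‖ * ‖B‖ + ‖B‖ * ‖Complex.I • A‖ :=
          add_le_add (norm_mul_le _ _) (norm_mul_le _ _)
      _ = 2 * ‖A‖ * ‖B‖ := by
          rw [norm_smul, Complex.norm_I, one_mul]; ring
  have hlipC : ∀ u v : ℝ, ‖Hrot A C u - Hrot A C v‖ ≤ M * |u - v| := by
    intro u v
    refine (Hrot_lipschitz A C hA u v).trans ?_
    have h1 : 2 * ‖A‖ * ‖C‖ ≤ M := by
      rw [hMdef]; nlinarith [norm_nonneg A, norm_nonneg C, abs_nonneg (u - v)]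
    have := abs_nonneg (u - v)
    nlinarith [norm_nonneg A, norm_nonneg C]
  -- the auxiliary function g
  set g : ℝ → 𝓗 →L[ℂ] 𝓗 := fun s => Hrot A B s - Hrot A B τ - (s - τ) • D with hgdef
  have hg' : ∀ s : ℝ, HasDerivAt g (Hrot A C s - D) s := by
    intro s
    have h1 := (Hrot_hasDerivAt A B s).sub_const (Hrot A B τ)
    have h2 : HasDerivAt (fun s : ℝ => (s - τ) • D) D s := by
      simpa using ((hasDerivAt_id s).sub_const τ).smul_const D
    convert h1.sub h2 using 1 <;> rfl
  have hcontC : Continuous fun s : ℝ => Hrot A C s - D :=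
    (Hrot_continuous A C).sub continuous_const
  have hgcont : Continuous g := by
    apply ((Hrot_continuous A B).sub continuous_const).sub
    exact (continuous_id.sub continuous_const).smul continuous_const
  -- pointwise bound on g
  have hgbound : ∀ s : ℝ, ‖g s‖ ≤ M * (s - τ) ^ 2 / 2 := by
    intro s
    have hftc : ∫ u in τ..s, (Hrot A C u - D) = g s - g τ :=
      intervalIntegral.integral_eq_sub_of_hasDerivAt (fun u _ => hg' u)
        (hcontC.intervalIntegrable τ s)
    have hgτ : g τ = 0 := by simp [hgdef]
    have hgs : g s = ∫ u in τ..s, (Hrot A C u - D) := by rw [hftc, hgτ, sub_zero]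
    rcases le_total τ s with hts | hts
    · have hbd : ‖∫ u in τ..s, (Hrot A C u - D)‖ ≤ |∫ u in τ..s, M * (u - τ)| := by
        apply intervalIntegral.norm_integral_le_abs_of_norm_le
        · rw [MeasureTheory.ae_restrict_iff' measurableSet_uIoc]
          filter_upwards with u hu
          rw [Set.uIoc_of_le hts] at hu
          have := hlipC u τ
          rwa [abs_of_nonneg (by linarith [hu.1] : (0:ℝ) ≤ u - τ)] at this
        · exact (continuous_const.mul (continuous_id.sub continuous_const)).intervalIntegrable τ s
      have hval : (∫ u in τ..s, M * (u - τ)) = M * (s - τ) ^ 2 / 2 := by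
        rw [intervalIntegral.integral_const_mul]
        rw [intervalIntegral.integral_comp_sub_right (fun u => u) τ]
        rw [integral_id]
        ring
      rw [hgs]
      refine hbd.trans ?_
      rw [hval, abs_of_nonneg (by positivity)]
    · have hbd : ‖∫ u in τ..s, (Hrot A C u - D)‖ ≤ |∫ u in τ..s, M * (τ - u)| := by
        apply intervalIntegral.norm_integral_le_abs_of_norm_le
        · rw [MeasureTheory.ae_restrict_iff' measurableSet_uIoc]
          filter_upwards with u hu
          rw [Set.uIoc_of_ge hts] at hu
          have := hlipC u τ
          rwa [show |u - τ| = τ - u by rw [abs_of_nonpos (by linarith [hu.2])]; ring] at this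
        · exact (continuous_const.mul (continuous_const.sub continuous_id)).intervalIntegrable τ s
      have hval : (∫ u in τ..s, M * (τ - u)) = -(M * (s - τ) ^ 2 / 2) := by
        rw [intervalIntegral.integral_const_mul]
        have hsub : (∫ u in τ..s, (τ - u)) = (s - τ) * τ - (s ^ 2 - τ ^ 2) / 2 := by
          rw [intervalIntegral.integral_sub intervalIntegrable_const intervalIntegral.intervalIntegrable_id]
          rw [integral_id, intervalIntegral.integral_const]
          simp [smul_eq_mul]
        rw [hsub]; ring
      rw [hgs]
      refine hbd.trans ?_
      rw [hval, abs_neg, abs_of_nonneg (by positivity)]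
  -- relate LHS to the integral of g
  set a : ℝ := τ - δ / 2 with ha
  set b : ℝ := τ + δ / 2 with hb
  have hHint : IntervalIntegrable (Hrot A B) MeasureTheory.volume a b :=
    (Hrot_continuous A B).intervalIntegrable a b
  have hkey : δ • Hrot A B τ - ∫ s in a..b, Hrot A B s = -∫ s in a..b, g s := by
    have hsplit : (∫ s in a..b, g s)
        = (∫ s in a..b, Hrot A B s) - ((b - a) • Hrot A B τ)
          - (∫ s in a..b, (s - τ)) • D := by
      simp only [hgdef]
      have hi1 : IntervalIntegrable (fun s : ℝ => Hrot A B s - Hrot A B τ)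
          MeasureTheory.volume a b := hHint.sub intervalIntegrable_const
      have hi2 : IntervalIntegrable (fun s : ℝ => (s - τ) • D) MeasureTheory.volume a b :=
        (((continuous_id.sub continuous_const).smul
          (continuous_const : Continuous fun _ : ℝ => D)).intervalIntegrable a b :
            IntervalIntegrable (fun s : ℝ => (s - τ) • D) MeasureTheory.volume a b)
      rw [intervalIntegral.integral_sub hi1 hi2]
      rw [intervalIntegral.integral_sub hHint intervalIntegrable_const]
      rw [intervalIntegral.integral_smul_const, intervalIntegral.integral_const]
    have hba : b - a = δ := by rw [ha, hb]; ring
    have hzero : (∫ s in a..b, (s - τ)) = 0 := by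
      rw [intervalIntegral.integral_comp_sub_right (fun u => u) τ, integral_id]
      have h1 : b - τ = δ / 2 := by rw [hb]; ring
      have h2 : a - τ = -(δ / 2) := by rw [ha]; ring
      rw [h1, h2]; ring
    rw [hsplit, hzero, hba, zero_smul, sub_zero]
    abel
  rw [hkey, norm_neg]
  -- final integral estimate
  have hfin : ‖∫ s in a..b, g s‖ ≤ |∫ s in a..b, M * (s - τ) ^ 2 / 2| := by
    apply intervalIntegral.norm_integral_le_abs_of_norm_le
    · exact MeasureTheory.ae_of_all _ hgbound
    · exact ((continuous_const.mul
        ((continuous_id.sub continuous_const).pow 2)).div_const 2).intervalIntegrable a b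
  refine hfin.trans ?_
  have hval : (∫ s in a..b, M * (s - τ) ^ 2 / 2) = M * δ ^ 3 / 24 := by
    have : (fun s : ℝ => M * (s - τ) ^ 2 / 2) = fun s => (M / 2) * ((s - τ) ^ 2) := by
      funext s; ring
    rw [this, intervalIntegral.integral_const_mul,
      intervalIntegral.integral_comp_sub_right (fun u => u ^ 2) τ, integral_pow]
    have h1 : b - τ = δ / 2 := by rw [hb]; ring
    have h2 : a - τ = -(δ / 2) := by rw [ha]; ring
    rw [h1, h2]
    push_cast
    ring
  rw [hval, abs_of_nonneg (by positivity), hMdef]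
  exact le_of_eq (by ring)
end

section
/- Let Λ > 0 and Γ₁, Γ₂ ≥ 0 be real numbers, T > 0, and let f : ℝ → ℝ be continuous and satisfy f(δ) ≤ ∫₀^δ ( (1/2)·(Λ Γ₁ + Γ₂/4)·s² + Λ·f(s) ) ds for every δ ∈ [0, T]. Then for every δ ∈ [0, T], f(δ) ≤ ((4 Λ Γ₁ + Γ₂)/(8 Λ³)) · (2·(e^{Λδ} − 1) − Λδ·(2 + Λδ)). -/
/-- Integral (Grönwall-type) inequality: if a continuous `f : ℝ → ℝ` satisfies
`f(δ) ≤ ∫₀^δ ((1/2)(ΛΓ₁ + Γ₂/4) s² + Λ f(s)) ds` on `[0, T]`, then on `[0, T]`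
`f(δ) ≤ ((4ΛΓ₁ + Γ₂)/(8Λ³))·(2(e^{Λδ} − 1) − Λδ(2 + Λδ))`. -/
theorem stmt_11 (Λ Γ₁ Γ₂ T : ℝ) (hΛ : 0 < Λ) (hΓ₁ : 0 ≤ Γ₁) (hΓ₂ : 0 ≤ Γ₂)
    (hT : 0 < T) (f : ℝ → ℝ) (hf : Continuous f)
    (hineq : ∀ δ ∈ Set.Icc (0 : ℝ) T,
      f δ ≤ ∫ s in (0 : ℝ)..δ, ((1 / 2) * (Λ * Γ₁ + Γ₂ / 4) * s ^ 2 + Λ * f s)) :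
    ∀ δ ∈ Set.Icc (0 : ℝ) T,
      f δ ≤ ((4 * Λ * Γ₁ + Γ₂) / (8 * Λ ^ 3)) *
        (2 * (Real.exp (Λ * δ) - 1) - Λ * δ * (2 + Λ * δ)) := by
  set c : ℝ := (1 / 2) * (Λ * Γ₁ + Γ₂ / 4) with hc
  set C : ℝ := (4 * Λ * Γ₁ + Γ₂) / (8 * Λ ^ 3) with hC
  set F : ℝ → ℝ := fun s => c * s ^ 2 + Λ * f s with hF
  have hFcont : Continuous F := by
    apply Continuous.add
    · exact (continuous_const.mul (continuous_pow 2))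
    · exact continuous_const.mul hf
  set g : ℝ → ℝ := fun x => ∫ s in (0 : ℝ)..x, F s with hg
  set B : ℝ → ℝ := fun x =>
    C * (2 * (Real.exp (Λ * x) - 1) - Λ * x * (2 + Λ * x)) with hB
  -- derivative of g
  have hg' : ∀ x : ℝ, HasDerivAt g (F x) x := by
    intro x
    exact intervalIntegral.integral_hasDerivAt_right
      (hFcont.intervalIntegrable _ _)
      (hFcont.stronglyMeasurableAtFilter _ _)
      hFcont.continuousAt
  -- derivative of B
  have hB' : ∀ x : ℝ, HasDerivAt B (c * x ^ 2 + Λ * B x) x := by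
    intro x
    have h1 : HasDerivAt (fun x : ℝ =>
        C * (2 * (Real.exp (Λ * x) - 1) - Λ * x * (2 + Λ * x)))
        (C * (2 * (Λ * Real.exp (Λ * x)) - (Λ * (2 + Λ * x) + Λ * x * Λ))) x := by
      have he : HasDerivAt (fun x : ℝ => Real.exp (Λ * x)) (Λ * Real.exp (Λ * x)) x := by
        have := (Real.hasDerivAt_exp (Λ * x)).comp x ((hasDerivAt_id x).const_mul Λ)
        simpa [mul_comm, Function.comp_def] using this
      have h2 : HasDerivAt (fun x : ℝ => 2 * (Real.exp (Λ * x) - 1))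
          (2 * (Λ * Real.exp (Λ * x))) x := ((he.sub_const 1).const_mul 2)
      have h3 : HasDerivAt (fun x : ℝ => Λ * x * (2 + Λ * x))
          (Λ * (2 + Λ * x) + Λ * x * Λ) x := by
        have ha : HasDerivAt (fun x : ℝ => Λ * x) Λ x := by
          simpa using (hasDerivAt_id x).const_mul Λ
        have hb : HasDerivAt (fun x : ℝ => 2 + Λ * x) Λ x := by
          simpa using ha.const_add 2
        exact ha.mul hb
      exact (h2.sub h3).const_mul C
    have heq : C * (2 * (Λ * Real.exp (Λ * x)) - (Λ * (2 + Λ * x) + Λ * x * Λ))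
        = c * x ^ 2 + Λ * B x := by
      have hΛ3 : (8 : ℝ) * Λ ^ 3 ≠ 0 := by positivity
      simp only [hB, hC, hc]
      field_simp
      ring
    rw [← heq]
    exact h1
  -- f ≤ g on [0,T]
  have hfg : ∀ x ∈ Set.Icc (0 : ℝ) T, f x ≤ g x := fun x hx => hineq x hx
  -- h := g - B satisfies Gronwall
  have key : ∀ x ∈ Set.Icc (0 : ℝ) T, g x - B x ≤ gronwallBound 0 Λ 0 (x - 0) := by
    apply le_gronwallBound_of_liminf_deriv_right_le
      (f := fun x => g x - B x) (f' := fun x => F x - (c * x ^ 2 + Λ * B x))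
    · apply Continuous.continuousOn
      apply Continuous.sub
      · exact continuous_iff_continuousAt.2 fun x => (hg' x).continuousAt
      · fun_prop
    · intro x hx r hr
      exact (((hg' x).sub (hB' x)).hasDerivWithinAt (s := Set.Ici x)).liminf_right_slope_le hr
    · simp [hg, hB]
    · intro x hx
      have hfx : f x ≤ g x := hfg x ⟨hx.1, le_of_lt hx.2⟩
      have : F x - (c * x ^ 2 + Λ * B x) = Λ * (f x - B x) := by
        simp only [hF]; ring
      rw [this]
      have : Λ * (f x - B x) ≤ Λ * (g x - B x) := by
        apply mul_le_mul_of_nonneg_left _ (le_of_lt hΛ)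
        linarith
      linarith
  intro δ hδ
  have h1 := hfg δ hδ
  have h2 := key δ hδ
  rw [gronwallBound_ε0] at h2
  simp at h2
  calc f δ ≤ g δ := h1
    _ ≤ B δ := by linarith
    _ = _ := rfl
end

section
/- For all positive integers n and b, let x = n / 2^{⌈log₂ n⌉}, θ₀ = arcsin(1/(2√x)), and let θ be the real number θ₀ − (π/2^b)²·(2x − 1)/√(4x − 1) rounded to the nearest integer multiple of 2π/2^b, i.e. θ = (2π/2^b) · round( (2^b/(2π)) · ( θ₀ − (π/2^b)²·(2x − 1)/√(4x − 1) ) ). Then the success probability P = x·( (1 + (2 − 4x)·sin²θ)² + sin²(2θ) ) satisfies P ≥ 1 − (3/2)²·(π/2^b)². -/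
open Real
set_option maxHeartbeats 1000000

lemma sin_sq_le_sq' (δ : ℝ) : Real.sin δ ^ 2 ≤ δ ^ 2 := by
  have h : |Real.sin δ| ≤ |δ| := Real.abs_sin_le_abs
  calc Real.sin δ ^ 2 = |Real.sin δ| ^ 2 := (sq_abs _).symm
    _ ≤ |δ| ^ 2 := pow_le_pow_left₀ (abs_nonneg _) h 2
    _ = δ ^ 2 := sq_abs _

lemma F_le_pos (c ε δ : ℝ) (hc0 : 0 ≤ c) (hε0 : 0 ≤ ε) (hcε : c * ε ≤ 2)
    (hδ0 : 0 ≤ δ) (hδ : δ ≤ ε - c * ε ^ 2) :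
    Real.sin δ * Real.cos δ + c * Real.sin δ ^ 2 ≤ ε := by
  have h1 : Real.sin δ * Real.cos δ ≤ δ := by
    have h := Real.sin_le (by linarith : (0:ℝ) ≤ 2 * δ)
    rw [Real.sin_two_mul] at h
    linarith
  have h2 := sin_sq_le_sq' δ
  have hd0 : 0 ≤ ε - c * ε ^ 2 := le_trans hδ0 hδ
  have h4 : δ ^ 2 ≤ (ε - c * ε ^ 2) ^ 2 := by nlinarith
  have h5 : c * δ ^ 2 ≤ c * (ε - c * ε ^ 2) ^ 2 := by nlinarith
  have h6 : 0 ≤ c ^ 2 * ε ^ 3 * (2 - c * ε) := by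
    have : (0:ℝ) ≤ 2 - c * ε := by linarith
    positivity
  nlinarith [mul_le_mul_of_nonneg_left h2 hc0]

lemma F_ge_neg (c ε t : ℝ) (hc0 : 0 ≤ c) (hc : c ≤ 3/5) (hε0 : 0 < ε)
    (hcε : c * ε ≤ 1/4) (ht0 : 0 < t) (ht : t ≤ ε + c * ε ^ 2) (ht2 : t ≤ 1/2) :
    Real.sin t * Real.cos t - c * Real.sin t ^ 2 ≤ ε := by
  have htt : t^2 ≤ 1/4 := by nlinarith
  have ht3 : t^3 ≤ t/4 := by nlinarith
  have ht4 : t^4 ≤ t/8 := by nlinarith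
  have ht4' : t^4 ≤ t^3/2 := by nlinarith
  have ht5 : t^5 ≤ t^3/4 := by nlinarith
  have ht4b : t^4 ≤ t^2/4 := by nlinarith
  have ht5b : t^5 ≤ t^2/8 := by nlinarith
  have h3p : 0 < t^3 := by positivity
  have h2t : |2 * t| ≤ 1 := by rw [abs_of_nonneg (by linarith)]; linarith
  have ht1 : |t| ≤ 1 := by rw [abs_of_nonneg ht0.le]; linarith
  have hb2 := abs_le.1 (Real.sin_bound h2t)
  have hb1 := abs_le.1 (Real.sin_bound ht1)
  rw [abs_of_nonneg (by linarith : (0:ℝ) ≤ 2*t)] at hb2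
  rw [abs_of_nonneg ht0.le] at hb1
  have hup : Real.sin t * Real.cos t ≤ t - (2/3) * t^3 + (5/12) * t^4 := by
    have h := hb2.2
    rw [Real.sin_two_mul] at h
    nlinarith
  have hL0 : 0 ≤ t - t^3/6 - (5/96) * t^4 := by linarith
  have hsinL : t - t^3/6 - (5/96) * t^4 ≤ Real.sin t := by nlinarith [hb1.1, mul_le_mul_of_nonneg_left ht2 (by positivity : (0:ℝ) ≤ t^4)]
  have hs2 : (t - t^3/6 - (5/96) * t^4)^2 ≤ Real.sin t ^ 2 :=
    pow_le_pow_left₀ hL0 hsinL 2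
  have hL2 : t^2 - t^4/3 - (5/48)*t^5 ≤ (t - t^3/6 - (5/96) * t^4)^2 := by
    have hid : (t - t^3/6 - (5/96)*t^4)^2
        = t^2 - t^4/3 - (5/48)*t^5 + (t^3/6 + (5/96)*t^4)^2 := by ring
    linarith [sq_nonneg (t^3/6 + (5/96)*t^4)]
  have hkey : t - (2/3) * t^3 + (5/12) * t^4 - c * (t^2 - t^4/3 - (5/48)*t^5) ≤ ε := by
    have hposL2 : 0 ≤ t^2 - t^4/3 - (5/48)*t^5 := by linarith
    rcases le_or_gt t ε with h | h
    · have := mul_nonneg hc0 hposL2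
      linarith
    · have he2 : c * ε^2 ≤ c * t^2 :=
        mul_le_mul_of_nonneg_left (pow_le_pow_left₀ hε0.le h.le 2) hc0
      have hεt : t - c * t^2 ≤ ε := by linarith
      nlinarith [mul_le_mul hc ht4' (by positivity : (0:ℝ) ≤ t^4) (by norm_num : (0:ℝ) ≤ 3/5),
        mul_le_mul hc ht5 (by positivity : (0:ℝ) ≤ t^5) (by norm_num : (0:ℝ) ≤ 3/5)]
  have hmul : c * (t^2 - t^4/3 - (5/48)*t^5) ≤ c * Real.sin t ^2 :=
    mul_le_mul_of_nonneg_left (le_trans hL2 hs2) hc0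
  linarith

lemma F_abs_le (c ε u : ℝ) (hc0 : 0 ≤ c) (hc : c ≤ 3/5) (hu : |u| ≤ ε)
    (hε : ε = π/2 ∨ ε = π/4 ∨ (0 < ε ∧ ε ≤ π/8)) :
    |Real.sin (u - c*ε^2) * Real.cos (u - c*ε^2) + c * Real.sin (u - c*ε^2)^2| ≤ ε := by
  have hpi1 : (3.141592 : ℝ) < π := Real.pi_gt_d6
  have hpi2 : π < 3.15 := Real.pi_lt_d2
  have hpisq : π^2 < 10 := by nlinarith
  obtain ⟨δ, hδdef⟩ : ∃ d : ℝ, d = u - c*ε^2 := ⟨_, rfl⟩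
  rw [← hδdef]
  have hu1 := abs_le.1 hu
  have hε0 : (0:ℝ) < ε := by
    rcases hε with h | h | h
    · rw [h]; linarith
    · rw [h]; linarith
    · exact h.1
  have hεle : ε ≤ π/2 := by
    rcases hε with h | h | h
    · rw [h]
    · rw [h]; linarith
    · linarith [h.2]
  have hcε2 : 0 ≤ c * ε^2 := by positivity
  have hδup : δ ≤ ε - c * ε^2 := by rw [hδdef]; linarith [hu1.2]
  have hδlo : -(ε + c*ε^2) ≤ δ := by rw [hδdef]; linarith [hu1.1]
  have hsc : Real.sin δ * Real.cos δ ≤ 1/2 := by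
    nlinarith [Real.sin_sq_add_cos_sq δ, sq_nonneg (Real.sin δ - Real.cos δ)]
  have hsc' : -(1/2) ≤ Real.sin δ * Real.cos δ := by
    nlinarith [Real.sin_sq_add_cos_sq δ, sq_nonneg (Real.sin δ + Real.cos δ)]
  have hss1 : Real.sin δ ^ 2 ≤ 1 := Real.sin_sq_le_one δ
  have hss0 : 0 ≤ c * Real.sin δ ^ 2 := by positivity
  have hcεle : c * ε ≤ 2 := by nlinarith
  rw [abs_le]
  constructor
  · -- lower bound
    rcases hε with h | h | h
    · subst h; nlinarith
    · subst h; nlinarith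
    · obtain ⟨hε0', hε8⟩ := h
      have hε8' : ε ≤ 0.394 := by nlinarith
      have hcε : c * ε ≤ 1/4 := by nlinarith
      rcases le_or_gt 0 δ with hd | hd
      · have hs0 : 0 ≤ Real.sin δ := Real.sin_nonneg_of_nonneg_of_le_pi hd (by nlinarith)
        have hc0' : 0 ≤ Real.cos δ := Real.cos_nonneg_of_mem_Icc ⟨by linarith, by nlinarith⟩
        nlinarith [mul_nonneg hs0 hc0']
      · have ht2 : -δ ≤ 1/2 := by nlinarith
        have key := F_ge_neg c ε (-δ) hc0 hc hε0' hcε (by linarith) (by linarith) ht2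
        rw [Real.sin_neg, Real.cos_neg] at key
        nlinarith
  · -- upper bound
    rcases hε with h | h | h
    · -- ε = π/2 : crude bound 1/2 + c ≤ π/2
      subst h
      have : c * Real.sin δ ^2 ≤ c := by nlinarith
      nlinarith
    · -- ε = π/4
      subst h
      rcases le_or_gt 0 δ with hd | hd
      · exact F_le_pos c (π/4) δ hc0 (by linarith) hcεle hd hδup
      · have hδlo' : -(π/2) ≤ δ := by nlinarith
        have hs0 : Real.sin δ ≤ 0 :=
          Real.sin_nonpos_of_nonpos_of_neg_pi_le hd.le (by linarith)
        have hc0' : 0 ≤ Real.cos δ := Real.cos_nonneg_of_mem_Icc ⟨hδlo', by linarith⟩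
        have hscneg : Real.sin δ * Real.cos δ ≤ 0 := mul_nonpos_of_nonpos_of_nonneg hs0 hc0'
        have : c * Real.sin δ ^2 ≤ c := by nlinarith
        nlinarith
    · obtain ⟨hε0', hε8⟩ := h
      have hε8' : ε ≤ 0.394 := by nlinarith
      have hcε : c * ε ≤ 1/4 := by nlinarith
      rcases le_or_gt 0 δ with hd | hd
      · exact F_le_pos c ε δ hc0 hε0.le hcεle hd hδup
      · have hδlo' : -(π/2) ≤ δ := by nlinarith
        have hs0 : Real.sin δ ≤ 0 :=
          Real.sin_nonpos_of_nonpos_of_neg_pi_le hd.le (by linarith)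
        have hc0' : 0 ≤ Real.cos δ := Real.cos_nonneg_of_mem_Icc ⟨hδlo', by linarith⟩
        have hscneg : Real.sin δ * Real.cos δ ≤ 0 := mul_nonpos_of_nonpos_of_nonneg hs0 hc0'
        have hsq : Real.sin δ ^2 ≤ δ^2 := sin_sq_le_sq' δ
        have hδ2 : δ^2 ≤ (ε + c*ε^2)^2 := by nlinarith
        have hfin : c * Real.sin δ ^2 ≤ c * (ε + c*ε^2)^2 := by nlinarith
        nlinarith [mul_nonneg hc0 hε0.le, sq_nonneg (c*ε), mul_nonneg (mul_nonneg hc0 hc0) hε0.le]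

lemma c_le_35 (x q : ℝ) (h1 : 1/2 < x) (h2 : x ≤ 1) (hq0 : 0 < q) (hq2 : q^2 = 4*x-1) :
    (2*x-1)/q ≤ 3/5 := by
  rw [div_le_iff₀ hq0]
  have hAB : 0 < 3*q + 5*(2*x-1) := by linarith
  nlinarith [hq2, mul_nonneg (by linarith : (0:ℝ) ≤ 1-x) (by linarith : (0:ℝ) ≤ 100*x-36)]

lemma final_bound (x ε F : ℝ) (h1 : 1/2 < x) (h2 : x ≤ 1) (hF2 : F^2 ≤ ε^2) :
    1 - (3/2)^2*ε^2 ≤ 1 - 4*(1-x)*(4*x-1)*F^2 := by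
  have h94 : 4*(1-x)*(4*x-1) ≤ 9/4 := by nlinarith [sq_nonneg (8*x-5)]
  nlinarith [mul_le_mul h94 hF2 (sq_nonneg F) (by norm_num : (0:ℝ) ≤ 9/4)]

set_option maxHeartbeats 2000000 in
/-- Lower bound on the success probability of preparing an equal superposition over `n`
basis states using a `b`-bit ancilla rotation, with the adjusted rotation angle `θ`. -/
theorem stmt_13 (n b : ℕ) (hn : 0 < n) (hb : 0 < b) :
    let x : ℝ := n / 2 ^ Nat.clog 2 n
    let θ₀ : ℝ := Real.arcsin (1 / (2 * Real.sqrt x))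
    let θ : ℝ := (2 * Real.pi / 2 ^ b) *
      (round ((2 ^ b / (2 * Real.pi)) *
        (θ₀ - (Real.pi / 2 ^ b) ^ 2 * (2 * x - 1) / Real.sqrt (4 * x - 1))) : ℤ)
    x * ((1 + (2 - 4 * x) * Real.sin θ ^ 2) ^ 2 + Real.sin (2 * θ) ^ 2)
      ≥ 1 - (3 / 2) ^ 2 * (Real.pi / 2 ^ b) ^ 2 := by
  intro x θ₀ θ
  have hpi : (0:ℝ) < π := Real.pi_pos
  have h2b : (0:ℝ) < 2^b := by positivity
  set ε : ℝ := π / 2^b with hεdef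
  have hε0 : 0 < ε := by positivity
  -- bounds on x
  have h2k : (0:ℝ) < (2:ℝ)^(Nat.clog 2 n) := by positivity
  have hxle : x ≤ 1 := by
    rw [show x = (n:ℝ)/2^(Nat.clog 2 n) from rfl, div_le_one h2k]
    exact_mod_cast Nat.le_pow_clog one_lt_two n
  have hxgt : 1/2 < x := by
    rw [show x = (n:ℝ)/2^(Nat.clog 2 n) from rfl, lt_div_iff₀ h2k]
    have h2n : (2:ℕ)^(Nat.clog 2 n) < 2*n := by
      rcases Nat.lt_or_ge n 2 with h | h
      · interval_cases n
        simp [Nat.clog_one_right]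
      · have hk1 : 0 < Nat.clog 2 n := Nat.clog_pos one_lt_two h
        have hlt : (2:ℕ)^(Nat.clog 2 n - 1) < n := by
          simpa [Nat.pred_eq_sub_one] using Nat.pow_pred_clog_lt_self one_lt_two (by omega : 1 < n)
        have hke : Nat.clog 2 n = (Nat.clog 2 n - 1) + 1 := by omega
        rw [hke, pow_succ]
        omega
    have h2nR : (2:ℝ)^(Nat.clog 2 n) < 2*(n:ℝ) := by exact_mod_cast h2n
    linarith
  have hx0 : 0 < x := by linarith
  have hx0' : x ≠ 0 := ne_of_gt hx0
  have hsx0 : 0 < Real.sqrt x := Real.sqrt_pos.2 hx0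
  have hsx2 : Real.sqrt x ^ 2 = x := Real.sq_sqrt hx0.le
  -- θ₀ facts
  have hs_le : 1/(2*Real.sqrt x) ≤ 1 := by
    rw [div_le_one (by positivity)]
    have h := Real.sqrt_le_sqrt (by linarith : (1/4:ℝ) ≤ x)
    rw [show (1/4:ℝ) = (1/2)^2 from by norm_num, Real.sqrt_sq (by norm_num : (0:ℝ) ≤ 1/2)] at h
    linarith
  have hsin0 : Real.sin θ₀ = 1/(2*Real.sqrt x) := Real.sin_arcsin (le_trans (by norm_num : (-1:ℝ) ≤ 0) (by positivity)) hs_le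
  have hsin0pos : 0 < Real.sin θ₀ := by rw [hsin0]; positivity
  have hcos0 : Real.cos θ₀ = Real.sqrt (1 - (1/(2*Real.sqrt x))^2) := Real.cos_arcsin _
  have hcos0_nonneg : 0 ≤ Real.cos θ₀ := hcos0 ▸ Real.sqrt_nonneg _
  have hsin0sq : Real.sin θ₀ ^ 2 = 1/(4*x) := by
    rw [hsin0, div_pow, one_pow]
    congr 1
    linear_combination 4*hsx2
  have hcos0sq : Real.cos θ₀ ^ 2 = 1 - 1/(4*x) := by
    rw [Real.cos_sq', hsin0sq]
  -- c and the square root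
  have hq0 : 0 < Real.sqrt (4*x-1) := Real.sqrt_pos.2 (by linarith)
  have hq2 : Real.sqrt (4*x-1)^2 = 4*x-1 := Real.sq_sqrt (by linarith)
  set c : ℝ := (2*x-1)/Real.sqrt (4*x-1) with hcdef
  have hc0 : 0 ≤ c := div_nonneg (by linarith) hq0.le
  have hc35 : c ≤ 3/5 := c_le_35 x _ hxgt hxle hq0 hq2
  -- rounding bound
  set z := ((2:ℝ)^b/(2*π)) * (θ₀ - (π/2^b)^2 * (2*x-1)/Real.sqrt (4*x-1)) with hzdef
  have hθval : θ = 2*ε*((round z : ℤ) : ℝ) := by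
    rw [show θ = (2*π/2^b) * ((round z : ℤ) : ℝ) from rfl, hεdef]
    ring
  have hzval : θ₀ - ε^2*c = 2*ε*z := by
    rw [hzdef, hεdef, hcdef]
    field_simp
  set u : ℝ := θ - (θ₀ - ε^2*c) with hudef
  have hu : |u| ≤ ε := by
    have h1 : u = 2*ε*(((round z : ℤ) : ℝ) - z) := by
      rw [hudef, hθval, hzval]; ring
    rw [h1, abs_mul, abs_of_pos (by positivity : (0:ℝ) < 2*ε)]
    have h2 := abs_sub_round z
    rw [abs_sub_comm] at h2
    have h3 : 2*ε*|((round z : ℤ) : ℝ) - z| ≤ 2*ε*(1/2) :=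
      mul_le_mul_of_nonneg_left h2 (by positivity)
    linarith
  -- the case hypothesis on ε
  have hcase : ε = π/2 ∨ ε = π/4 ∨ (0 < ε ∧ ε ≤ π/8) := by
    match b, hb with
    | 1, _ => left; rw [hεdef]; norm_num
    | 2, _ => right; left; rw [hεdef]; norm_num
    | (k+3), _ =>
      right; right
      refine ⟨hε0, ?_⟩
      rw [hεdef]
      apply div_le_div_of_nonneg_left hpi.le (by norm_num)
      calc (8:ℝ) = 2^3 := by norm_num
        _ ≤ 2^(k+3) := by
          apply pow_le_pow_right₀ one_le_two
          omega
  have hF := F_abs_le c ε u hc0 hc35 hu hcase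
  -- trig decomposition
  have hθsplit : θ = θ₀ + (u - c*ε^2) := by rw [hudef]; ring
  have hSδ : Real.sin θ = Real.sin θ₀ * Real.cos (u - c*ε^2) + Real.cos θ₀ * Real.sin (u - c*ε^2) := by
    rw [hθsplit, Real.sin_add]
  have hE1 : 4*x*Real.sin θ₀^2 = 1 := by rw [hsin0sq]; field_simp
  have hE2 : 4*x*Real.cos θ₀^2 = 4*x - 1 := by rw [hcos0sq]; field_simp
  have hsq4 : (2*Real.sin θ₀*Real.cos θ₀*(2*x))^2 = 4*x-1 := by
    rw [show (2*Real.sin θ₀*Real.cos θ₀*(2*x))^2 = 16*x^2*(Real.sin θ₀^2*Real.cos θ₀^2) from by ring,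
      hsin0sq, hcos0sq]
    field_simp
    ring
  have hE4 : 2*Real.sin θ₀*Real.cos θ₀*(2*x) = Real.sqrt (4*x-1) := by
    rw [← hsq4, Real.sqrt_sq (mul_nonneg (mul_nonneg (mul_nonneg (by norm_num : (0:ℝ) ≤ 2) hsin0pos.le) hcos0_nonneg) (by linarith))]
  have hE5 : c * Real.sqrt (4*x-1) = 2*x-1 := by
    rw [hcdef]
    exact div_mul_cancel₀ _ hq0.ne'
  have hE3 := Real.sin_sq_add_cos_sq (u - c*ε^2)
  have hE' : 4*x*Real.sin θ ^2 - 1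
      = 2*Real.sqrt (4*x-1) * (Real.sin (u - c*ε^2) * Real.cos (u - c*ε^2) + c * Real.sin (u - c*ε^2)^2) := by
    rw [hSδ]
    linear_combination (Real.cos (u - c*ε^2)^2) * hE1 + (Real.sin (u - c*ε^2)^2) * hE2
      + (2*Real.sin (u - c*ε^2)*Real.cos (u - c*ε^2)) * hE4
      + (-2*Real.sin (u - c*ε^2)^2) * hE5 + hE3
  -- probability identity
  have hsin2θ : Real.sin (2*θ)^2 = 4*Real.sin θ^2*(1-Real.sin θ^2) := by
    rw [Real.sin_two_mul]
    linear_combination (4*Real.sin θ^2) * (Real.sin_sq_add_cos_sq θ)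
  set F : ℝ := Real.sin (u - c*ε^2) * Real.cos (u - c*ε^2) + c * Real.sin (u - c*ε^2)^2 with hFdef
  have hfinal : x * ((1 + (2 - 4 * x) * Real.sin θ ^ 2) ^ 2 + Real.sin (2 * θ) ^ 2)
      = 1 - 4*(1-x)*(4*x-1)*F^2 := by
    calc x * ((1 + (2 - 4 * x) * Real.sin θ ^ 2) ^ 2 + Real.sin (2 * θ) ^ 2)
        = 1 - (1-x)*(4*x*Real.sin θ^2 - 1)^2 := by rw [hsin2θ]; ring
      _ = 1 - (1-x)*(2*Real.sqrt (4*x-1)*F)^2 := by rw [show (4*x*Real.sin θ^2 - 1) = 2*Real.sqrt (4*x-1)*F from by rw [hE']]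
      _ = 1 - 4*(1-x)*(4*x-1)*F^2 := by linear_combination (-(4:ℝ)*(1-x)*F^2) * hq2
  have hF2 : F^2 ≤ ε^2 := by
    have h := abs_le.1 hF
    exact sq_le_sq' h.1 h.2
  rw [ge_iff_le, hfinal]
  exact final_bound x ε F hxgt hxle hF2
end

section
/- Let x be a real number with 1/2 < x ≤ 1, let θ₀ = arcsin(1/(2√x)), and let Δθ ∈ ℝ. Setting θ = θ₀ + Δθ, the exact identity x·( (1 + (2 − 4x)·sin²θ)² + sin²(2θ) ) = 1 − 4(1 − x)(4x − 1)·sin²(Δθ) + 4(1 − x)·( 2(4x − 1 − 2x²)·sin²(Δθ) − (2x − 1)·√(4x − 1)·sin(2Δθ) )·sin²(Δθ) holds. -/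
/-- For `1/2 < x ≤ 1`, `θ₀ = arcsin(1/(2√x))` and `θ = θ₀ + Δθ`, the exact identity
`x·((1 + (2 − 4x)·sin²θ)² + sin²(2θ))
  = 1 − 4(1 − x)(4x − 1)·sin²(Δθ)
    + 4(1 − x)·(2(4x − 1 − 2x²)·sin²(Δθ) − (2x − 1)·√(4x − 1)·sin(2Δθ))·sin²(Δθ)`. -/
theorem stmt_14 (x Δθ : ℝ) (h1 : 1 / 2 < x) (h2 : x ≤ 1) :
    x * ((1 + (2 - 4 * x) *
            Real.sin (Real.arcsin (1 / (2 * Real.sqrt x)) + Δθ) ^ 2) ^ 2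
          + Real.sin (2 * (Real.arcsin (1 / (2 * Real.sqrt x)) + Δθ)) ^ 2)
      = 1 - 4 * (1 - x) * (4 * x - 1) * Real.sin Δθ ^ 2
        + 4 * (1 - x) *
            (2 * (4 * x - 1 - 2 * x ^ 2) * Real.sin Δθ ^ 2
              - (2 * x - 1) * Real.sqrt (4 * x - 1) * Real.sin (2 * Δθ)) *
            Real.sin Δθ ^ 2 := by
  have hx0 : (0:ℝ) < x := by linarith
  set s := Real.sqrt x with hsdef
  have hs : s ^ 2 = x := Real.sq_sqrt hx0.le
  have hs0 : 0 < s := Real.sqrt_pos.mpr hx0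
  have hshalf : 1 / 2 < s := by nlinarith
  set r := Real.sqrt (4 * x - 1) with hrdef
  have hr : r ^ 2 = 4 * x - 1 := Real.sq_sqrt (by linarith)
  have hr0 : 0 ≤ r := Real.sqrt_nonneg _
  set a := Real.sin Δθ with hadef
  set b := Real.cos Δθ with hbdef
  have hb : b ^ 2 = 1 - a ^ 2 := by
    rw [hadef, hbdef, Real.cos_sq']
  have hle1 : 1 / (2 * s) ≤ 1 := by
    rw [div_le_one (by linarith)]; linarith
  have hlem1 : (-1 : ℝ) ≤ 1 / (2 * s) := by
    have : (0:ℝ) ≤ 1/(2*s) := by positivity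
    linarith
  have hsin0 : Real.sin (Real.arcsin (1 / (2 * s))) = 1 / (2 * s) :=
    Real.sin_arcsin hlem1 hle1
  have hcos0 : Real.cos (Real.arcsin (1 / (2 * s))) = r / (2 * s) := by
    rw [Real.cos_arcsin]
    rw [show 1 - (1 / (2 * s)) ^ 2 = (r / (2 * s)) ^ 2 by
      field_simp
      linear_combination 4 * hs - hr]
    exact Real.sqrt_sq (by positivity)
  have hS : Real.sin (Real.arcsin (1 / (2 * s)) + Δθ) = (b + r * a) / (2 * s) := by
    rw [Real.sin_add, hsin0, hcos0]; ring
  have hC : Real.cos (Real.arcsin (1 / (2 * s)) + Δθ) = (r * b - a) / (2 * s) := by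
    rw [Real.cos_add, hsin0, hcos0]; ring
  have hsinSq : Real.sin (Real.arcsin (1 / (2 * s)) + Δθ) ^ 2
      = (b + r * a) ^ 2 / (4 * x) := by
    rw [hS, div_pow, show (2 * s) ^ 2 = 4 * x by rw [mul_pow, hs]; ring]
  have hsin2 : Real.sin (2 * (Real.arcsin (1 / (2 * s)) + Δθ))
      = (b + r * a) * (r * b - a) / (2 * x) := by
    rw [Real.sin_two_mul, hS, hC]
    field_simp
    linear_combination (-(1:ℝ) * ((b + r * a) * (r * b - a))) * hs
  rw [hsinSq, hsin2, Real.sin_two_mul Δθ]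
  field_simp
  rw [← hadef, ← hbdef]
  linear_combination ((-64)*x^2 + (16)*b^2 + (32)*a^1*b^1*r^1 + (16)*a^2*r^2 + (-64)*x^1*b^2 + (-256)*x^1*a^1*b^1*r^1 + (-384)*x^1*a^2*r^2 + (64)*x^2*b^2 + (256)*x^2*a^1*b^1*r^1 + (384)*x^2*a^2*r^2 + (16)*b^2*r^2 + (32)*a^1*b^1*r^3 + (16)*a^2*r^4 + (16) + (64)*x^1*a^2 + (-64)*x^2*a^2 + (16)*r^2) * hb + ((-256)*x^1*a^2 + (256)*x^2*a^2 + (-256)*x^1*a^3*b^1*r^1 + (-64)*x^1*a^4*r^2 + (256)*x^2*a^3*b^1*r^1 + (64)*x^2*a^4*r^2 + (448)*x^1*a^4 + (-704)*x^2*a^4 + (32)*a^1*b^1*r^1 + (16)*a^2*r^2 + (16) + (256)*x^3*a^4 + (-16)*a^2) * hr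
end

section
/- For every positive integer b, setting m = 2^{b−1}, the inequality e · m · ln(1 + 1/m) · exp(−m·ln(1 + 1/m)) ≥ 1/(1 + 2^{−(2b+1)}) holds; equivalently, e · m · ln(1 + 1/m) / (1 + 1/m)^m ≥ 1/(1 + 1/(8m²)). -/
open Real

lemma aux_log_lb {x : ℝ} (hx : 0 < x) (hx2 : x ≤ 1/2) :
    x - x^2/2 + x^3/5 ≤ Real.log (1 + x) := by
  have hq0 : 0 ≤ x - x^2/2 + x^3/5 := by nlinarith
  have hq1 : x - x^2/2 + x^3/5 ≤ 1 := by nlinarith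
  rw [Real.le_log_iff_exp_le (by linarith)]
  have hb := Real.exp_bound' hq0 hq1 (n := 3) (by norm_num)
  have hsum : (∑ m ∈ Finset.range 3, (x - x^2/2 + x^3/5) ^ m / m.factorial)
      = 1 + (x - x^2/2 + x^3/5) + (x - x^2/2 + x^3/5)^2/2 := by
    simp [Finset.sum_range_succ, Nat.factorial]
  rw [hsum] at hb
  refine hb.trans ?_
  have h4 : ((Nat.factorial 3 : ℝ)) = 6 := by norm_num [Nat.factorial]
  rw [h4]
  push_cast
  nlinarith [sq_nonneg x, pow_pos hx 3, pow_pos hx 4, pow_pos hx 5, sq_nonneg (x^2), sq_nonneg (x^3), sq_nonneg (x^4)]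

lemma aux_main {x : ℝ} (hx : 0 < x) (hx2 : x ≤ 1/2) :
    Real.exp 1 * (1/x) * Real.log (1 + x) * Real.exp (-((1/x) * Real.log (1 + x)))
      ≥ 1 / (1 + x^2/8) := by
  set L := Real.log (1 + x) with hL
  have hLx : L ≤ x := by
    have := Real.log_le_sub_one_of_pos (x := 1 + x) (by linarith)
    simpa using this
  have hLlb := aux_log_lb hx hx2
  set t : ℝ := L / x with ht
  have htval : (1/x) * L = t := by rw [ht]; ring
  have ht1 : t ≤ 1 := by rw [ht, div_le_one hx]; exact hLx
  have htlb : 1 - x/2 + x^2/5 ≤ t := by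
    rw [ht, le_div_iff₀ hx]; nlinarith
  have ht0 : (0:ℝ) < t := by nlinarith
  set s : ℝ := 1 - t with hs
  have hs0 : 0 ≤ s := by linarith
  have hsub : s ≤ x/2 - x^2/5 := by simp only [hs]; linarith
  -- LHS = t * exp s
  have hexp : Real.exp 1 * (1/x) * L * Real.exp (-((1/x) * L)) = t * Real.exp s := by
    rw [htval, hs, show (1:ℝ) - t = 1 + -t from by ring, Real.exp_add, ht]
    ring
  rw [ge_iff_le, hexp, div_le_iff₀ (by positivity), ← sub_nonneg]
  have hq := Real.quadratic_le_exp_of_nonneg hs0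
  have hquad : (1 - s) * (1 + s + s^2/2) ≤ t * Real.exp s := by
    have h1s : (0:ℝ) ≤ 1 - s := by simp only [hs]; linarith
    have htt : t = 1 - s := by rw [hs]; ring
    rw [htt]
    exact mul_le_mul_of_nonneg_left hq h1s
  have hσ0 : 0 ≤ x/2 - x^2/5 := by nlinarith
  have hs2 : s^2 ≤ (x/2 - x^2/5)^2 := by nlinarith
  have hs3 : s^3 ≤ (x/2 - x^2/5)^3 := pow_le_pow_left₀ hs0 hsub 3
  have hfin : (1:ℝ) ≤ (1 - s) * (1 + s + s^2/2) * (1 + x^2/8) := by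
    have hexpand : (1 - s) * (1 + s + s^2/2) * (1 + x^2/8)
        = 1 + x^2/8 - (1 + x^2/8) * (s^2/2 + s^3/2) := by ring
    rw [hexpand]
    have hmono : (1 + x^2/8) * (s^2/2 + s^3/2)
        ≤ (1 + x^2/8) * ((x/2 - x^2/5)^2/2 + (x/2 - x^2/5)^3/2) := by
      have hu : (0:ℝ) ≤ 1 + x^2/8 := by positivity
      apply mul_le_mul_of_nonneg_left _ hu
      linarith
    have hpoly : (1 + x^2/8) * ((x/2 - x^2/5)^2/2 + (x/2 - x^2/5)^3/2) ≤ x^2/8 := by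
      nlinarith [pow_pos hx 3, pow_pos hx 4, pow_pos hx 5, pow_pos hx 6, pow_pos hx 7, pow_pos hx 8, sq_nonneg x, mul_pos hx hx]
    linarith
  nlinarith [Real.exp_pos s]

/-- For every positive integer `b`, with `m = 2^{b−1}`,
`e · m · ln(1 + 1/m) · exp(−m·ln(1 + 1/m)) ≥ 1/(1 + 2^{−(2b+1)})`. -/
theorem stmt_17 (b : ℕ) (hb : 0 < b) :
    Real.exp 1 * (2 : ℝ) ^ (b - 1) * Real.log (1 + 1 / (2 : ℝ) ^ (b - 1)) *
        Real.exp (-((2 : ℝ) ^ (b - 1) * Real.log (1 + 1 / (2 : ℝ) ^ (b - 1))))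
      ≥ 1 / (1 + 1 / 2 ^ (2 * b + 1)) := by
  rcases eq_or_lt_of_le (show 1 ≤ b from hb) with hb1 | hb2
  · -- b = 1
    rw [← hb1]
    norm_num
    rw [Real.exp_neg, Real.exp_log (by norm_num : (0:ℝ) < 2)]
    nlinarith [Real.exp_one_gt_d9, Real.log_two_gt_d9]
  · -- b ≥ 2
    obtain ⟨k, hk, rfl⟩ : ∃ k, 1 ≤ k ∧ b = k + 1 := ⟨b - 1, by omega, by omega⟩
    have hxpos : (0:ℝ) < 1 / 2^k := by positivity
    have h2k : (2:ℝ) ≤ 2^k := le_self_pow₀ (by norm_num) (by omega)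
    have hxle : (1:ℝ) / 2^k ≤ 1/2 := by
      apply one_div_le_one_div_of_le (by norm_num) h2k
    have key := aux_main hxpos hxle
    rw [one_div_one_div] at key
    have hu : ((1:ℝ)/2^k)^2/8 = 1 / 2^(2*(k+1)+1) := by
      rw [div_pow, one_pow, ← pow_mul]
      rw [show 2*(k+1)+1 = k*2+3 by ring, pow_add]
      norm_num
      ring
    rw [hu] at key
    simpa using key
end

section
/- Let ι be a finite type with a distinguished element 0, let E be a finite-dimensional complex inner product space, let α : ι → ℝ satisfy α_ℓ ≥ 0 for all ℓ with λ = Σ_ℓ α_ℓ > 0, and let (U_ℓ)_{ℓ ∈ ι} be a family of unitary operators on E. Let PREP be a unitary operator on the Hilbert space ℂ^ι (with standard orthonormal basis (e_ℓ)) such that PREP e₀ = Σ_ℓ √(α_ℓ/λ) e_ℓ, and let SEL be the operator on ℂ^ι ⊗ E determined by SEL(e_ℓ ⊗ ψ) = e_ℓ ⊗ U_ℓ ψ for all ℓ ∈ ι and ψ ∈ E. Then for every ψ ∈ E, applying (PREP ⊗ I), then SEL, then (PREP† ⊗ I) to e₀ ⊗ ψ and projecting the first factor onto e₀ yields ( ⟨e₀|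 ⊗ I ) (PREP† ⊗ I) SEL (PREP ⊗ I) (e₀ ⊗ ψ) = (1/λ) Σ_ℓ α_ℓ U_ℓ ψ. -/
/-- The linear-combination-of-unitaries (LCU) block-encoding identity underlying the
qubitization algorithm, with `ℂ^ι ⊗ E` realized as the space of functions `ι → E`:
`(⟨e₀| ⊗ I)(PREP† ⊗ I)·SEL·(PREP ⊗ I)(e₀ ⊗ ψ) = (1/λ) Σ_ℓ α_ℓ U_ℓ ψ`. -/
theorem stmt_19 {ι : Type*} [Fintype ι] [DecidableEq ι] (z : ι)
    {E : Type*} [NormedAddCommGroup E] [InnerProductSpace ℂ E] [FiniteDimensional ℂ E]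
    (α : ι → ℝ) (hα : ∀ ℓ, 0 ≤ α ℓ)
    (lam : ℝ) (hlam : lam = ∑ ℓ, α ℓ) (hlampos : 0 < lam)
    (U : ι → E →L[ℂ] E) (hU : ∀ ℓ, U ℓ ∈ unitary (E →L[ℂ] E))
    (P : EuclideanSpace ℂ ι →L[ℂ] EuclideanSpace ℂ ι)
    (hP : P ∈ unitary (EuclideanSpace ℂ ι →L[ℂ] EuclideanSpace ℂ ι))
    (hP0 : P (EuclideanSpace.single z 1) =
      ∑ ℓ, ((Real.sqrt (α ℓ / lam) : ℝ) : ℂ) • EuclideanSpace.single ℓ 1)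
    -- the tensor-product operators `PREP ⊗ I`, `PREP† ⊗ I` and `SEL`, realized on `ι → E`
    (prepT prepAdjT selT : (ι → E) → (ι → E))
    (hprepT : ∀ (f : ι → E) (ℓ : ι),
      prepT f ℓ = ∑ ℓ', (P (EuclideanSpace.single ℓ' 1) ℓ) • f ℓ')
    (hprepAdjT : ∀ (f : ι → E) (ℓ : ι),
      prepAdjT f ℓ =
        ∑ ℓ', ((ContinuousLinearMap.adjoint P) (EuclideanSpace.single ℓ' 1) ℓ) • f ℓ')
    (hselT : ∀ (f : ι → E) (ℓ : ι), selT f ℓ = U ℓ (f ℓ)) :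
    ∀ ψ : E, prepAdjT (selT (prepT (Pi.single z ψ))) z
      = (lam : ℂ)⁻¹ • ∑ ℓ, ((α ℓ : ℝ) : ℂ) • U ℓ ψ := by

  intro ψ
  set c : ι → ℂ := fun ℓ => ((Real.sqrt (α ℓ / lam) : ℝ) : ℂ) with hc
  -- coordinates of P e_z
  have hPz : ∀ ℓ', P (EuclideanSpace.single z 1) ℓ' = c ℓ' := by
    intro ℓ'
    have h1 : P (EuclideanSpace.single z 1) ℓ'
        = inner ℂ (EuclideanSpace.single ℓ' (1:ℂ)) (P (EuclideanSpace.single z 1)) := by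
      rw [EuclideanSpace.inner_single_left]; simp
    rw [h1, hP0, inner_sum]
    simp only [inner_smul_right, EuclideanSpace.inner_single_right,
      EuclideanSpace.single_apply]
    simp [apply_ite, Finset.sum_ite_eq', hc]
  -- coordinates of P† e_{ℓ'} at z
  have hAdj : ∀ ℓ', (ContinuousLinearMap.adjoint P) (EuclideanSpace.single ℓ' 1) z = c ℓ' := by
    intro ℓ'
    have h1 : (ContinuousLinearMap.adjoint P) (EuclideanSpace.single ℓ' 1) z
        = inner ℂ (EuclideanSpace.single z (1:ℂ))
            ((ContinuousLinearMap.adjoint P) (EuclideanSpace.single ℓ' 1)) := by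
      rw [EuclideanSpace.inner_single_left]; simp
    rw [h1, ContinuousLinearMap.adjoint_inner_right,
      EuclideanSpace.inner_single_right, hPz]
    simp [hc]
  have hcsq : ∀ ℓ', c ℓ' * c ℓ' = ((α ℓ' / lam : ℝ) : ℂ) := by
    intro ℓ'
    have h := Real.mul_self_sqrt (div_nonneg (hα ℓ') hlampos.le)
    simp only [hc]
    norm_cast
  rw [hprepAdjT]
  have hsel : ∀ ℓ', selT (prepT (Pi.single z ψ)) ℓ' = c ℓ' • U ℓ' ψ := by
    intro ℓ'
    rw [hselT]
    have : prepT (Pi.single z ψ) ℓ' = c ℓ' • ψ := by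
      rw [hprepT, Finset.sum_eq_single z]
      · rw [hPz]; simp
      · intro b _ hb; simp [Pi.single_eq_of_ne hb]
      · simp
    rw [this, map_smul]
  calc (∑ ℓ', (ContinuousLinearMap.adjoint P) (EuclideanSpace.single ℓ' 1) z
        • selT (prepT (Pi.single z ψ)) ℓ')
      = ∑ ℓ', ((α ℓ' / lam : ℝ) : ℂ) • U ℓ' ψ := by
        refine Finset.sum_congr rfl fun ℓ' _ => ?_
        rw [hAdj, hsel, smul_smul, hcsq]
    _ = (lam : ℂ)⁻¹ • ∑ ℓ, ((α ℓ : ℝ) : ℂ) • U ℓ ψ := by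
        rw [Finset.smul_sum]
        refine Finset.sum_congr rfl fun ℓ' _ => ?_
        rw [smul_smul]
        congr 1
        push_cast
        rw [div_eq_inv_mul]
end
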